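/- arXiv:2111.05030 — 2 statements merged into one kernel-verified Lean document; each statement's English description precedes it below -/
import Mathlib

section
/- For every integer r ≥ 1: (i) for every j ∈ ℕ the function |Δ^(r)|^j is ℙ-integrable on X (Δ^(r) has finite moments of all orders); (ii) ∫_X Δ^(r)(x) dℙ(x) = 0; and consequently (iii) lim_{N→∞} (1/N)·Σ_{n<N} (s(n+r) − s(n)) = 0. -/
open Filter Topology MeasureTheory

noncomputable section

/-- Sum of the base-`b` digits of `n`. -/
def digitSum (b n : ℕ) : ℕ := (Nat.digits b n).sum

/-- `Δ^(r)(n) = s(n+r) - s(n)`, the variation of the base-`b` digit sum when adding `r`. -/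
def delta (b r n : ℕ) : ℤ := (digitSum b (n + r) : ℤ) - (digitSum b n : ℤ)

/-- The value `x_0 + x_1 b + ⋯ + x_k b^k` given by the first `k+1` digits of a `b`-adic
integer `x : ℕ → Fin b`. -/
def valk (b : ℕ) (x : ℕ → Fin b) (k : ℕ) : ℕ :=
  ∑ i ∈ Finset.range (k + 1), (x i : ℕ) * b ^ i

/-- `Δ_k^(r)(x) = s_k(x+r) - s_k(x)`: since carries propagate upwards, the first `k+1`
digits of `x + r` are the base-`b` digits of `(x_0 + x_1 b + ⋯ + x_k b^k + r) % b^(k+1)`. -/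
def deltak (b r k : ℕ) (x : ℕ → Fin b) : ℤ :=
  (digitSum b ((valk b x k + r) % b ^ (k + 1)) : ℤ) - (digitSum b (valk b x k) : ℤ)

/-- `Δ^(r)(x) = lim_k Δ_k^(r)(x)`; the sequence is eventually constant for `ℙ`-a.e. `x`. -/
def deltaX (b r : ℕ) (x : ℕ → Fin b) : ℤ :=
  limUnder atTop fun k => deltak b r k x


lemma digitSum_le {b : ℕ} (hb : 2 ≤ b) {K n : ℕ} (h : n < b ^ K) :
    digitSum b n ≤ (b - 1) * K := by
  rcases Nat.eq_zero_or_pos n with rfl | hn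
  · simp [digitSum]
  have hlen : (Nat.digits b n).length ≤ K := by
    rw [Nat.digits_len b n (by omega) (by omega)]
    have := Nat.log_lt_of_lt_pow (by omega : n ≠ 0) h
    omega
  calc (Nat.digits b n).sum ≤ (Nat.digits b n).length • (b - 1) :=
        List.sum_le_card_nsmul _ _ (fun x hx => by
          have := Nat.digits_lt_base (by omega) hx; omega)
    _ = (Nat.digits b n).length * (b - 1) := by simp [smul_eq_mul]
    _ ≤ K * (b - 1) := Nat.mul_le_mul_right _ hlen
    _ = (b - 1) * K := Nat.mul_comm _ _

lemma digitSum_of_lt {b d : ℕ} (hb : 2 ≤ b) (hd : d < b) : digitSum b d = d := by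
  rcases Nat.eq_zero_or_pos d with rfl | h
  · simp [digitSum]
  · rw [digitSum, Nat.digits_def' (by omega : 1 < b) h, Nat.mod_eq_of_lt hd,
      Nat.div_eq_of_lt hd]
    simp

lemma digitSum_add_pow_mul {b : ℕ} (hb : 2 ≤ b) {u K : ℕ} (hu : u < b ^ K) (m : ℕ) :
    digitSum b (u + b ^ K * m) = digitSum b u + digitSum b m := by
  rcases Nat.eq_zero_or_pos m with rfl | hm
  · simp [digitSum]
  have hlen : (Nat.digits b u).length ≤ K := by
    rcases Nat.eq_zero_or_pos u with rfl | hu0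
    · simp
    rw [Nat.digits_len b u (by omega) (by omega)]
    have := Nat.log_lt_of_lt_pow (by omega : u ≠ 0) hu
    omega
  have hK : (Nat.digits b u).length + (K - (Nat.digits b u).length) = K := by omega
  have := Nat.digits_append_zeroes_append_digits (b := b) (k := K - (Nat.digits b u).length)
    (m := m) (n := u) (by omega : 1 < b) hm
  rw [hK] at this
  have hsum := congrArg List.sum this
  simpa [digitSum, List.sum_append, List.sum_replicate] using hsum.symm

lemma valk_zero_lt {b : ℕ} (hb : 2 ≤ b) (x : ℕ → Fin b) (K : ℕ) :
    (∑ i ∈ Finset.range K, (x i : ℕ) * b ^ i) < b ^ K := by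
  induction K with
  | zero => simp
  | succ K ih =>
    rw [Finset.sum_range_succ]
    have hx : (x K : ℕ) * b ^ K ≤ (b - 1) * b ^ K :=
      Nat.mul_le_mul_right _ (by have := (x K).isLt; omega)
    have h1 : b ^ K + (b - 1) * b ^ K = b ^ (K + 1) := by
      have : (1 + (b - 1)) = b := by omega
      rw [pow_succ, mul_comm (b ^ K) b]
      calc b ^ K + (b - 1) * b ^ K = (1 + (b - 1)) * b ^ K := by ring
        _ = b * b ^ K := by rw [this]
    omega

lemma valk_lt {b : ℕ} (hb : 2 ≤ b) (x : ℕ → Fin b) (k : ℕ) :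
    valk b x k < b ^ (k + 1) := valk_zero_lt hb x (k + 1)

lemma valk_succ (b : ℕ) (x : ℕ → Fin b) (k : ℕ) :
    valk b x (k + 1) = valk b x k + (x (k + 1) : ℕ) * b ^ (k + 1) :=
  Finset.sum_range_succ _ _

lemma deltak_succ_of_lt {b r k : ℕ} (hb : 2 ≤ b) {x : ℕ → Fin b}
    (h : valk b x k + r < b ^ (k + 1)) :
    deltak b r (k + 1) x = deltak b r k x ∧ valk b x (k + 1) + r < b ^ (k + 2) := by
  have hvk := valk_lt hb x k
  have hd : (x (k + 1) : ℕ) < b := (x (k + 1)).isLt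
  have hnext : valk b x (k + 1) + r < b ^ (k + 2) := by
    rw [valk_succ]
    have hx : (x (k + 1) : ℕ) * b ^ (k + 1) ≤ (b - 1) * b ^ (k + 1) :=
      Nat.mul_le_mul_right _ (by omega)
    have h1 : b ^ (k + 1) + (b - 1) * b ^ (k + 1) = b ^ (k + 2) := by
      have h2 : (1 + (b - 1)) = b := by omega
      calc b ^ (k + 1) + (b - 1) * b ^ (k + 1) = (1 + (b - 1)) * b ^ (k + 1) := by ring
        _ = b ^ (k + 2) := by rw [h2]; ring
    omega
  refine ⟨?_, hnext⟩
  have e1 : valk b x (k + 1) + r = (valk b x k + r) + b ^ (k + 1) * (x (k + 1) : ℕ) := by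
    rw [valk_succ]; ring
  have e2 : digitSum b (valk b x (k + 1) + r) = digitSum b (valk b x k + r) + (x (k+1) : ℕ) := by
    rw [e1, digitSum_add_pow_mul hb h, digitSum_of_lt hb hd]
  have e3 : digitSum b (valk b x (k + 1)) = digitSum b (valk b x k) + (x (k+1) : ℕ) := by
    rw [valk_succ, mul_comm ((x (k+1) : ℕ)) (b ^ (k+1)), digitSum_add_pow_mul hb hvk,
      digitSum_of_lt hb hd]
  unfold deltak
  rw [Nat.mod_eq_of_lt hnext, Nat.mod_eq_of_lt h, e2, e3]
  push_cast
  ring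

lemma deltak_stable {b r k : ℕ} (hb : 2 ≤ b) {x : ℕ → Fin b}
    (h : valk b x k + r < b ^ (k + 1)) :
    ∀ m, k ≤ m → deltak b r m x = deltak b r k x := by
  have key : ∀ j, deltak b r (k + j) x = deltak b r k x ∧ valk b x (k + j) + r < b ^ (k + j + 1) := by
    intro j
    induction j with
    | zero => exact ⟨rfl, h⟩
    | succ j ih =>
      obtain ⟨h1, h2⟩ := ih
      obtain ⟨h3, h4⟩ := deltak_succ_of_lt hb h2
      exact ⟨by rw [show k + (j+1) = (k+j) + 1 by ring, h3, h1], by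
        rw [show k + (j+1) = (k+j) + 1 by ring]; exact h4⟩
  intro m hm
  obtain ⟨j, rfl⟩ := Nat.exists_eq_add_of_le hm
  exact (key j).1

lemma good_digit_lt {b r k : ℕ} (hb : 2 ≤ b) {x : ℕ → Fin b}
    (hr : r ≤ b ^ k) (hx : (x k : ℕ) + 2 ≤ b) :
    valk b x k + r < b ^ (k + 1) := by
  have h1 : (∑ i ∈ Finset.range k, (x i : ℕ) * b ^ i) < b ^ k := valk_zero_lt hb x k
  have h2 : valk b x k = (∑ i ∈ Finset.range k, (x i : ℕ) * b ^ i) + (x k : ℕ) * b ^ k :=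
    Finset.sum_range_succ _ _
  have hx2 : (x k : ℕ) * b ^ k ≤ (b - 2) * b ^ k := Nat.mul_le_mul_right _ (by omega)
  have h3 : b ^ k + (b - 2) * b ^ k + b ^ k = b ^ (k + 1) := by
    have h4 : (1 + (b - 2) + 1) = b := by omega
    calc b ^ k + (b - 2) * b ^ k + b ^ k = (1 + (b - 2) + 1) * b ^ k := by ring
      _ = b ^ (k + 1) := by rw [h4, pow_succ, mul_comm]
  omega

lemma abs_deltak_le {b r k : ℕ} (hb : 2 ≤ b) (x : ℕ → Fin b) :
    |deltak b r k x| ≤ 2 * (b - 1 : ℕ) * (k + 1) := by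
  have h1 : digitSum b ((valk b x k + r) % b ^ (k + 1)) ≤ (b - 1) * (k + 1) :=
    digitSum_le hb (Nat.mod_lt _ (by positivity))
  have h2 : digitSum b (valk b x k) ≤ (b - 1) * (k + 1) := digitSum_le hb (valk_lt hb x k)
  rw [abs_le]
  unfold deltak
  constructor
  · have := (digitSum b ((valk b x k + r) % b ^ (k + 1))).zero_le
    push_cast
    have h2' : (digitSum b (valk b x k) : ℤ) ≤ ((b - 1 : ℕ) : ℤ) * (k + 1) := by exact_mod_cast h2
    linarith [Int.ofNat_nonneg (digitSum b ((valk b x k + r) % b ^ (k + 1)))]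
  · push_cast
    have h1' : (digitSum b ((valk b x k + r) % b ^ (k + 1)) : ℤ) ≤ ((b - 1 : ℕ) : ℤ) * (k + 1) := by
      exact_mod_cast h1
    linarith [Int.ofNat_nonneg (digitSum b (valk b x k))]

def stopSet (b r : ℕ) (x : ℕ → Fin b) : Set ℕ := {t | (x (r + t) : ℕ) + 2 ≤ b}

def stopT (b r : ℕ) (x : ℕ → Fin b) : ℕ := r + sInf (stopSet b r x)

def gfun (b r : ℕ) (x : ℕ → Fin b) : ℤ := deltak b r (stopT b r x) x

lemma stopT_good {b r : ℕ} (hb : 2 ≤ b) (hr : 1 ≤ r) {x : ℕ → Fin b}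
    (hne : (stopSet b r x).Nonempty) :
    valk b x (stopT b r x) + r < b ^ (stopT b r x + 1) := by
  have hmem : sInf (stopSet b r x) ∈ stopSet b r x := Nat.sInf_mem hne
  have hrk : r ≤ b ^ (stopT b r x) := by
    calc r ≤ 2 ^ r := (Nat.lt_two_pow_self).le
      _ ≤ b ^ r := Nat.pow_le_pow_left hb r
      _ ≤ b ^ (stopT b r x) := Nat.pow_le_pow_right (by omega) (Nat.le_add_right _ _)
  exact good_digit_lt hb hrk hmem

lemma deltak_eq_gfun {b r : ℕ} (hb : 2 ≤ b) (hr : 1 ≤ r) {x : ℕ → Fin b}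
    (hne : (stopSet b r x).Nonempty) {m : ℕ} (hm : stopT b r x ≤ m) :
    deltak b r m x = gfun b r x :=
  deltak_stable hb (stopT_good hb hr hne) m hm

lemma tendsto_deltak {b r : ℕ} (hb : 2 ≤ b) (hr : 1 ≤ r) {x : ℕ → Fin b}
    (hne : (stopSet b r x).Nonempty) :
    Tendsto (fun k => deltak b r k x) atTop (𝓝 (gfun b r x)) := by
  apply Tendsto.congr' (f₁ := fun _ => gfun b r x)
  · filter_upwards [eventually_ge_atTop (stopT b r x)] with m hm
    exact (deltak_eq_gfun hb hr hne hm).symm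
  · exact tendsto_const_nhds

lemma deltaX_eq_gfun {b r : ℕ} (hb : 2 ≤ b) (hr : 1 ≤ r) {x : ℕ → Fin b}
    (hne : (stopSet b r x).Nonempty) :
    deltaX b r x = gfun b r x :=
  (tendsto_deltak hb hr hne).limUnder_eq

lemma abs_deltak_le_stopT {b r : ℕ} (hb : 2 ≤ b) (hr : 1 ≤ r) {x : ℕ → Fin b}
    (hne : (stopSet b r x).Nonempty) (k : ℕ) :
    |deltak b r k x| ≤ 2 * (b - 1 : ℕ) * (stopT b r x + 1) := by
  rcases le_or_gt k (stopT b r x) with h | h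
  · refine (abs_deltak_le hb x).trans ?_
    have : (k : ℤ) ≤ (stopT b r x : ℤ) := by exact_mod_cast h
    push_cast
    nlinarith [Int.ofNat_nonneg (b - 1)]
  · rw [deltak_eq_gfun hb hr hne h.le]
    refine (abs_deltak_le hb x (k := stopT b r x)).trans ?_
    push_cast
    simp

lemma measurable_valk (b k : ℕ) : Measurable (fun x : ℕ → Fin b => valk b x k) := by
  unfold valk
  refine Finset.measurable_sum _ (fun i _ => ?_)
  exact (measurable_from_top (f := fun v : Fin b => (v : ℕ) * b ^ i)).comp (measurable_pi_apply i)

lemma measurable_deltak (b r k : ℕ) : Measurable (fun x : ℕ → Fin b => deltak b r k x) := by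
  have : (fun x : ℕ → Fin b => deltak b r k x) =
      (fun n : ℕ => (digitSum b ((n + r) % b ^ (k + 1)) : ℤ) - (digitSum b n : ℤ)) ∘
        (fun x => valk b x k) := rfl
  rw [this]
  exact measurable_from_nat.comp (measurable_valk b k)

lemma measurableSet_digitCond (b : ℕ) (j : ℕ) :
    MeasurableSet {x : ℕ → Fin b | (x j : ℕ) + 2 ≤ b} := by
  have : {x : ℕ → Fin b | (x j : ℕ) + 2 ≤ b} =
      (fun x : ℕ → Fin b => x j) ⁻¹' {v : Fin b | (v : ℕ) + 2 ≤ b} := rfl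
  rw [this]
  exact measurable_pi_apply j trivial

lemma measurable_stopT (b r : ℕ) : Measurable (stopT b r) := by
  have h0 : Measurable (fun x : ℕ → Fin b => sInf (stopSet b r x)) := by
    apply measurable_to_countable'
    intro n
    have hmem := measurableSet_digitCond b
    have key : (fun x : ℕ → Fin b => sInf (stopSet b r x)) ⁻¹' {n} =
        ({x : ℕ → Fin b | (x (r + n) : ℕ) + 2 ≤ b} ∩
          ⋂ m ∈ Finset.range n, {x : ℕ → Fin b | ¬ ((x (r + m) : ℕ) + 2 ≤ b)}) ∪
        ((⋂ m : ℕ, {x : ℕ → Fin b | ¬ ((x (r + m) : ℕ) + 2 ≤ b)}) ∩ {x | n = 0}) := by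
      ext x
      simp only [Set.mem_preimage, Set.mem_singleton_iff, Set.mem_union, Set.mem_inter_iff,
        Set.mem_setOf_eq, Set.mem_iInter, Finset.mem_range]
      constructor
      · intro hx
        rcases Set.eq_empty_or_nonempty (stopSet b r x) with he | hne
        · right
          have h0 : sInf (stopSet b r x) = 0 := by rw [he, Nat.sInf_empty]
          refine ⟨fun m hm => ?_, by omega⟩
          have : m ∈ stopSet b r x := hm
          rw [he] at this
          exact this
        · left
          have h1 : sInf (stopSet b r x) ∈ stopSet b r x := Nat.sInf_mem hne
          rw [hx] at h1
          exact ⟨h1, fun m hm hmem' =>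
            Nat.notMem_of_lt_sInf (by omega : m < sInf (stopSet b r x)) hmem'⟩
      · rintro (⟨h1, h2⟩ | ⟨h3, hn⟩)
        · have hle : sInf (stopSet b r x) ≤ n := Nat.sInf_le h1
          have : ¬ sInf (stopSet b r x) < n := fun hlt =>
            h2 _ hlt (Nat.sInf_mem (⟨n, h1⟩ : (stopSet b r x).Nonempty))
          omega
        · have : stopSet b r x = ∅ := by
            ext m
            simp only [Set.mem_empty_iff_false, iff_false]
            exact h3 m
          rw [this, Nat.sInf_empty, hn]
    rw [key]
    apply MeasurableSet.union
    · exact (hmem _).inter (MeasurableSet.biInter (Set.to_countable _)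
        (fun m _ => (hmem _).compl))
    · refine (MeasurableSet.iInter (fun m => (hmem _).compl)).inter ?_
      by_cases hn : n = 0 <;> simp [hn]
  exact measurable_const.add h0

lemma measurable_gfun (b r : ℕ) : Measurable (gfun b r) := by
  apply measurable_to_countable'
  intro z
  have : gfun b r ⁻¹' {z} = ⋃ n : ℕ, ((stopT b r) ⁻¹' {n} ∩ (fun x => deltak b r n x) ⁻¹' {z}) := by
    ext x
    simp only [Set.mem_preimage, Set.mem_singleton_iff, Set.mem_iUnion, Set.mem_inter_iff]
    constructor
    · intro hx; exact ⟨stopT b r x, rfl, by rw [← hx]; rfl⟩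
    · rintro ⟨n, h1, h2⟩; rw [gfun, h1]; exact h2
  rw [this]
  exact MeasurableSet.iUnion fun n =>
    ((measurable_stopT b r) (by trivial)).inter ((measurable_deltak b r n) (by trivial))

section MeasurePart
variable {b : ℕ} {P : MeasureTheory.Measure (ℕ → Fin b)}

lemma cylinder_measurableSet (K : ℕ) (a : ℕ → Fin b) :
    MeasurableSet {x : ℕ → Fin b | ∀ i < K, x i = a i} := by
  have : {x : ℕ → Fin b | ∀ i < K, x i = a i} =
      ⋂ i : ℕ, ⋂ (_ : i < K), (fun x : ℕ → Fin b => x i) ⁻¹' {a i} := by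
    ext x; simp [Set.mem_iInter]
  rw [this]
  exact MeasurableSet.iInter fun i => MeasurableSet.iInter fun _ =>
    measurable_pi_apply i trivial

variable (hb : 2 ≤ b)
variable (hP : ∀ (k : ℕ) (a : ℕ → Fin b),
    P {x | ∀ i < k, x i = a i} = (1 / (b : ENNReal)) ^ k)

include hb hP

lemma prob_univ : P Set.univ = 1 := by
  have h := hP 0 (fun _ => ⟨0, by omega⟩)
  simpa using h

lemma bad_measure_le (m t : ℕ) :
    P {x : ℕ → Fin b | ∀ s < t, ¬ ((x (m + s) : ℕ) + 2 ≤ b)} ≤ (1 / (b : ENNReal)) ^ t := by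
  classical
  set ext : (Fin m → Fin b) → (ℕ → Fin b) := fun a i =>
    if h : i < m then a ⟨i, h⟩ else ⟨b - 1, by omega⟩ with hext
  have hsub : {x : ℕ → Fin b | ∀ s < t, ¬ ((x (m + s) : ℕ) + 2 ≤ b)} ⊆
      ⋃ a : Fin m → Fin b, {x : ℕ → Fin b | ∀ i < m + t, x i = ext a i} := by
    intro x hx
    refine Set.mem_iUnion.2 ⟨fun i => x i, fun i hi => ?_⟩
    by_cases h : i < m
    · simp [hext, h]
    · have hs : i = m + (i - m) ∧ i - m < t := by omega
      have hbad := hx (i - m) hs.2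
      rw [← hs.1] at hbad
      have hlt := (x i).isLt
      have : (x i : ℕ) = b - 1 := by omega
      simp only [hext, dif_neg h]
      exact Fin.ext (by simpa using this)
  calc P {x : ℕ → Fin b | ∀ s < t, ¬ ((x (m + s) : ℕ) + 2 ≤ b)}
      ≤ ∑' a : Fin m → Fin b, P {x : ℕ → Fin b | ∀ i < m + t, x i = ext a i} :=
        le_trans (measure_mono hsub) (measure_iUnion_le _)
    _ = ∑' _ : Fin m → Fin b, (1 / (b : ENNReal)) ^ (m + t) := by
        congr 1; funext a; exact hP (m + t) (ext a)
    _ = (Fintype.card (Fin m → Fin b) : ENNReal) * (1 / (b : ENNReal)) ^ (m + t) := by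
        rw [tsum_fintype]
        simp [Finset.sum_const, nsmul_eq_mul]
    _ = (b : ENNReal) ^ m * (1 / (b : ENNReal)) ^ (m + t) := by
        congr 1
        rw [Fintype.card_fun]
        simp
    _ = (1 / (b : ENNReal)) ^ t := by
        have hb0 : (b : ENNReal) ≠ 0 := by
          simp only [ne_eq, Nat.cast_eq_zero]; omega
        have hbt : (b : ENNReal) ≠ ⊤ := ENNReal.natCast_ne_top b
        rw [pow_add, one_div, ← mul_assoc, ← mul_pow, ENNReal.mul_inv_cancel hb0 hbt]
        simp

lemma stopSet_ae_nonempty (r : ℕ) :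
    P {x : ℕ → Fin b | ¬ (stopSet b r x).Nonempty} = 0 := by
  have hsub : ∀ t : ℕ, {x : ℕ → Fin b | ¬ (stopSet b r x).Nonempty} ⊆
      {x : ℕ → Fin b | ∀ s < t, ¬ ((x (r + s) : ℕ) + 2 ≤ b)} := by
    intro t x hx s _
    intro hmem
    exact hx ⟨s, hmem⟩
  have hle : ∀ t : ℕ, P {x : ℕ → Fin b | ¬ (stopSet b r x).Nonempty} ≤ (1 / (b : ENNReal)) ^ t :=
    fun t => le_trans (measure_mono (hsub t)) (bad_measure_le hb hP r t)
  have htend : Tendsto (fun t : ℕ => (1 / (b : ENNReal)) ^ t) atTop (𝓝 0) := by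
    apply ENNReal.tendsto_pow_atTop_nhds_zero_of_lt_one
    rw [one_div]
    refine ENNReal.inv_lt_one.2 ?_
    exact_mod_cast (by omega : 1 < b)
  have := ge_of_tendsto htend (Filter.Eventually.of_forall hle)
  simpa using this

lemma stopT_preimage_le (r n : ℕ) :
    P (stopT b r ⁻¹' {n}) ≤ (1 / (b : ENNReal)) ^ (n - r) := by
  have hsub : stopT b r ⁻¹' {n} ⊆
      {x : ℕ → Fin b | ∀ s < n - r, ¬ ((x (r + s) : ℕ) + 2 ≤ b)} := by
    intro x hx s hs
    have hT : r + sInf (stopSet b r x) = n := hx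
    intro hmem
    have := Nat.notMem_of_lt_sInf (show s < sInf (stopSet b r x) by omega)
    exact this hmem
  exact le_trans (measure_mono hsub) (bad_measure_le hb hP r (n - r))

end MeasurePart

section IntegrabilityPart

open Filter

lemma summable_aux {b : ℕ} (hb : 2 ≤ b) (r j : ℕ) :
    Summable (fun n : ℕ => ((2 * b * (n + 1) : ℕ) : ℝ) ^ j * ((b : ℝ)⁻¹) ^ (n - r)) := by
  have hb0 : (0:ℝ) < b := by positivity
  set q : ℝ := (b : ℝ)⁻¹ with hq
  have hq0 : 0 < q := by positivity
  have hq1 : q < 1 := by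
    rw [hq, inv_lt_one_iff₀]
    right; exact_mod_cast (by omega : 1 < b)
  rw [← summable_nat_add_iff r]
  have hgeom : Summable (fun n : ℕ => ((n:ℝ) + 1) ^ j * q ^ n) := by
    have h1 : Summable (fun n : ℕ => ((n:ℝ)) ^ j * q ^ n) :=
      summable_pow_mul_geometric_of_norm_lt_one (R := ℝ) j
        (r := q) (by rw [Real.norm_eq_abs, abs_of_pos hq0]; exact hq1)
    have h2 : Summable (fun n : ℕ => (((n + 1 : ℕ) : ℝ)) ^ j * q ^ (n + 1)) :=
      (summable_nat_add_iff (f := fun n : ℕ => ((n:ℝ)) ^ j * q ^ n) 1).2 h1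
    have h3 := h2.mul_left q⁻¹
    apply h3.congr
    intro n
    have hqne : q ≠ 0 := ne_of_gt hq0
    push_cast
    field_simp
    ring
  refine Summable.of_nonneg_of_le (fun n => by positivity) (fun n => ?_)
    (hgeom.mul_left (((2 * b * (r + 1) : ℕ) : ℝ) ^ j))
  · 
    have he : (n + r) - r = n := by omega
    rw [he]
    have hbase : ((2 * b * ((n + r) + 1) : ℕ) : ℝ) ≤ ((2 * b * (r + 1) : ℕ) : ℝ) * ((n:ℝ) + 1) := by
      push_cast
      nlinarith [mul_nonneg (mul_nonneg (by norm_num : (0:ℝ) ≤ 2) hb0.le)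
        (mul_nonneg (Nat.cast_nonneg r) (Nat.cast_nonneg n))]
    calc ((2 * b * ((n+r) + 1) : ℕ) : ℝ) ^ j * q ^ n
        ≤ (((2 * b * (r + 1) : ℕ) : ℝ) * ((n:ℝ) + 1)) ^ j * q ^ n :=
          mul_le_mul_of_nonneg_right (pow_le_pow_left₀ (by positivity) hbase j)
            (by positivity)
      _ = ((2 * b * (r + 1) : ℕ) : ℝ) ^ j * (((n:ℝ) + 1) ^ j * q ^ n) := by rw [mul_pow]; ring


variable {b : ℕ} {P : MeasureTheory.Measure (ℕ → Fin b)}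
variable (hb : 2 ≤ b)
variable (hP : ∀ (k : ℕ) (a : ℕ → Fin b),
    P {x | ∀ i < k, x i = a i} = (1 / (b : ENNReal)) ^ k)

include hb hP

lemma lintegral_comp_stopT_le (r : ℕ) (F : ℕ → ENNReal) :
    ∫⁻ x, F (stopT b r x) ∂P ≤ ∑' n : ℕ, F n * (1 / (b : ENNReal)) ^ (n - r) := by
  have hmeas : ∀ n : ℕ, MeasurableSet (stopT b r ⁻¹' {n}) :=
    fun n => measurable_stopT b r trivial
  have hdisj : Pairwise (Function.onFun Disjoint (fun n => stopT b r ⁻¹' {n})) := by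
    intro m n hmn
    apply Set.disjoint_left.2
    intro x hxm hxn
    exact hmn (by rw [show m = stopT b r x from hxm.symm, show stopT b r x = n from hxn])
  have hcover : (⋃ n : ℕ, stopT b r ⁻¹' {n}) = Set.univ := by
    ext x; simp
  calc ∫⁻ x, F (stopT b r x) ∂P
      = ∫⁻ x in ⋃ n : ℕ, stopT b r ⁻¹' {n}, F (stopT b r x) ∂P := by
        rw [hcover, Measure.restrict_univ]
    _ = ∑' n : ℕ, ∫⁻ x in stopT b r ⁻¹' {n}, F (stopT b r x) ∂P :=
        lintegral_iUnion hmeas hdisj _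
    _ ≤ ∑' n : ℕ, F n * (1 / (b : ENNReal)) ^ (n - r) := by
        apply ENNReal.tsum_le_tsum
        intro n
        have heq : ∫⁻ x in stopT b r ⁻¹' {n}, F (stopT b r x) ∂P
            = ∫⁻ _ in stopT b r ⁻¹' {n}, F n ∂P := by
          apply setLIntegral_congr_fun (hmeas n)
          exact (fun x hx => by
            rw [show stopT b r x = n from hx])
        rw [heq, setLIntegral_const]
        exact mul_le_mul_right (stopT_preimage_le hb hP r n) _

lemma integrable_pow_stopT (r j : ℕ) :
    Integrable (fun x => ((2 * b * (stopT b r x + 1) : ℕ) : ℝ) ^ j) P := by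
  constructor
  · refine Measurable.aestronglyMeasurable ?_
    exact (measurable_from_nat (f := fun n : ℕ => ((2 * b * (n + 1) : ℕ) : ℝ) ^ j)).comp
      (measurable_stopT b r)
  · rw [MeasureTheory.hasFiniteIntegral_def]
    have heq : ∀ x, (‖((2 * b * (stopT b r x + 1) : ℕ) : ℝ) ^ j‖₊ : ENNReal)
        = (fun n : ℕ => ((2 * b * (n + 1) : ℕ) : ENNReal) ^ j) (stopT b r x) := by
      intro x
      simp only [nnnorm_pow, Real.nnnorm_natCast]
      push_cast
      ring
    calc ∫⁻ x, (‖((2 * b * (stopT b r x + 1) : ℕ) : ℝ) ^ j‖₊ : ENNReal) ∂P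
        = ∫⁻ x, (fun n : ℕ => ((2 * b * (n + 1) : ℕ) : ENNReal) ^ j) (stopT b r x) ∂P := by
          congr 1; funext x; exact heq x
      _ ≤ ∑' n : ℕ, ((2 * b * (n + 1) : ℕ) : ENNReal) ^ j * (1 / (b : ENNReal)) ^ (n - r) :=
          lintegral_comp_stopT_le hb hP r _
      _ < ⊤ := by
          have hb0 : (b : ENNReal) ≠ 0 := by simp only [ne_eq, Nat.cast_eq_zero]; omega
          have hcoe : ∀ n : ℕ, ((2 * b * (n + 1) : ℕ) : ENNReal) ^ j
              * (1 / (b : ENNReal)) ^ (n - r)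
              = ((((2 * b * (n + 1) : ℕ) : NNReal) ^ j * ((b : NNReal)⁻¹) ^ (n - r) : NNReal)
                : ENNReal) := by
            intro n
            rw [ENNReal.coe_mul, ENNReal.coe_pow, ENNReal.coe_pow, one_div,
              ← ENNReal.coe_natCast b, ← ENNReal.coe_inv (by exact_mod_cast hb0)]
            norm_num
          rw [tsum_congr hcoe, lt_top_iff_ne_top, ENNReal.tsum_coe_ne_top_iff_summable,
            ← NNReal.summable_coe]
          refine (summable_aux hb r j).congr fun n => ?_
          push_cast
          ring

end IntegrabilityPart

lemma sum_range_rotate (B ρ : ℕ) (hB : 0 < B) (g : ℕ → ℝ) :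
    ∑ n ∈ Finset.range B, g ((n + ρ) % B) = ∑ n ∈ Finset.range B, g n := by
  have hd := Nat.div_add_mod ρ B
  have hmlt := Nat.mod_lt ρ hB
  have hmul : B * (ρ / B + 1) = B * (ρ / B) + B := by ring
  refine Finset.sum_nbij' (fun n => (n + ρ) % B) (fun m => (m + (B - ρ % B)) % B)
    ?_ ?_ ?_ ?_ ?_
  · intro n _; exact Finset.mem_range.2 (Nat.mod_lt _ hB)
  · intro m _; exact Finset.mem_range.2 (Nat.mod_lt _ hB)
  · intro n hn
    have hn' := Finset.mem_range.1 hn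
    show ((n + ρ) % B + (B - ρ % B)) % B = n
    rw [Nat.mod_add_mod]
    have key : n + ρ + (B - ρ % B) = n + B * (ρ / B + 1) := by omega
    rw [key, Nat.add_mul_mod_self_left, Nat.mod_eq_of_lt hn']
  · intro m hm
    have hm' := Finset.mem_range.1 hm
    show ((m + (B - ρ % B)) % B + ρ) % B = m
    rw [Nat.mod_add_mod]
    have key : m + (B - ρ % B) + ρ = m + B * (ρ / B + 1) := by omega
    rw [key, Nat.add_mul_mod_self_left, Nat.mod_eq_of_lt hm']
  · intro n _; rfl

section IntegralZero
variable {b : ℕ} {P : MeasureTheory.Measure (ℕ → Fin b)}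
variable (hb : 2 ≤ b)
variable (hP : ∀ (k : ℕ) (a : ℕ → Fin b),
    P {x | ∀ i < k, x i = a i} = (1 / (b : ENNReal)) ^ k)

include hb hP

lemma integrable_deltak_real (r k : ℕ) :
    Integrable (fun x => (deltak b r k x : ℝ)) P := by
  haveI : IsProbabilityMeasure P := ⟨prob_univ hb hP⟩
  have hmeas : Measurable (fun x => (deltak b r k x : ℝ)) :=
    (measurable_from_top (f := fun z : ℤ => (z : ℝ))).comp (measurable_deltak b r k)
  refine (integrable_const ((2 * (b - 1 : ℕ) * (k + 1) : ℕ) : ℝ)).mono'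
    hmeas.aestronglyMeasurable ?_
  refine Filter.Eventually.of_forall (fun x => ?_)
  rw [Real.norm_eq_abs]
  have h := abs_deltak_le (r := r) (k := k) hb x
  calc |((deltak b r k x : ℤ) : ℝ)| = ((|deltak b r k x| : ℤ) : ℝ) := by
        rw [Int.cast_abs]
    _ ≤ ((2 * (b - 1 : ℕ) * (k + 1) : ℤ) : ℝ) := by exact_mod_cast h
    _ = ((2 * (b - 1 : ℕ) * (k + 1) : ℕ) : ℝ) := by push_cast; ring

lemma integral_deltak_eq_zero (r k : ℕ) :
    ∫ x, (deltak b r k x : ℝ) ∂P = 0 := by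
  classical
  haveI : IsProbabilityMeasure P := ⟨prob_univ hb hP⟩
  set K := k + 1 with hK
  set ext : (Fin K → Fin b) → (ℕ → Fin b) :=
    fun a i => if h : i < K then a ⟨i, h⟩ else ⟨0, by omega⟩ with hext
  set C : (Fin K → Fin b) → Set (ℕ → Fin b) := fun a => {x | ∀ i < K, x i = ext a i} with hC
  have hmeas : ∀ a, MeasurableSet (C a) := fun a => cylinder_measurableSet K (ext a)
  have hdisj : Pairwise (Function.onFun Disjoint C) := by
    intro a a' haa'
    obtain ⟨i, hi⟩ := Function.ne_iff.1 haa'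
    apply Set.disjoint_left.2
    intro x hx hx'
    have h1 := hx i.val i.isLt
    have h2 := hx' i.val i.isLt
    apply hi
    have e1 : ext a i.val = a i := by simp [hext, i.isLt]
    have e2 : ext a' i.val = a' i := by simp [hext, i.isLt]
    rw [← e1, ← e2, ← h1, ← h2]
  have hcover : (⋃ a, C a) = Set.univ := by
    refine Set.eq_univ_of_forall (fun x => ?_)
    refine Set.mem_iUnion.2 ⟨fun i => x i.val, fun i hi => ?_⟩
    simp [hext, hi]
  have hval : ∀ a : Fin K → Fin b, valk b (ext a) k = (finFunctionFinEquiv a : ℕ) := by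
    intro a
    rw [finFunctionFinEquiv_apply, valk]
    rw [← Fin.sum_univ_eq_sum_range (fun i => ((ext a i : ℕ) * b ^ i)) K]
    refine Finset.sum_congr rfl (fun i _ => ?_)
    have : ext a i.val = a i := by simp [hext, i.isLt]
    rw [this]
  have hconst : ∀ a : Fin K → Fin b, ∀ x ∈ C a, (deltak b r k x : ℝ) = (deltak b r k (ext a) : ℝ) := by
    intro a x hx
    have : valk b x k = valk b (ext a) k := by
      unfold valk
      exact Finset.sum_congr rfl (fun i hi => by
        rw [hx i (Finset.mem_range.1 hi)])
    unfold deltak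
    rw [this]
  have hintOn : ∀ a : Fin K → Fin b, IntegrableOn (fun x => (deltak b r k x : ℝ)) (C a) P :=
    fun a => (integrable_deltak_real hb hP r k).integrableOn
  have key : ∫ x, (deltak b r k x : ℝ) ∂P
      = ∑ a : Fin K → Fin b, ((P (C a)).toReal • (deltak b r k (ext a) : ℝ)) := by
    rw [← MeasureTheory.setIntegral_univ, ← hcover,
      MeasureTheory.integral_iUnion_fintype hmeas hdisj hintOn]
    refine Finset.sum_congr rfl (fun a _ => ?_)
    rw [MeasureTheory.setIntegral_congr_fun (hmeas a) (hconst a),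
      MeasureTheory.setIntegral_const, measureReal_def]
  have hPC : ∀ a : Fin K → Fin b, (P (C a)).toReal = ((1 / (b:ℝ)) ^ K) := by
    intro a
    have := hP K (ext a)
    rw [hC]
    simp only
    rw [this]
    rw [ENNReal.toReal_pow, ENNReal.toReal_div]
    simp
  rw [key]
  have : ∑ a : Fin K → Fin b, ((P (C a)).toReal • (deltak b r k (ext a) : ℝ))
      = ((1 / (b:ℝ)) ^ K) * ∑ a : Fin K → Fin b, (deltak b r k (ext a) : ℝ) := by
    rw [Finset.mul_sum]
    exact Finset.sum_congr rfl (fun a _ => by rw [hPC a, smul_eq_mul])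
  rw [this]
  -- now show the sum over all prefixes vanishes
  set φ : ℕ → ℝ := fun n =>
    (digitSum b ((n + r) % b ^ K) : ℝ) - (digitSum b n : ℝ) with hφ
  have hfext : ∀ a : Fin K → Fin b, (deltak b r k (ext a) : ℝ) = φ (valk b (ext a) k) := by
    intro a
    simp [hφ, deltak, hK]
  have hsum : ∑ a : Fin K → Fin b, (deltak b r k (ext a) : ℝ)
      = ∑ n ∈ Finset.range (b ^ K), φ n := by
    rw [Finset.sum_congr rfl (fun a _ => hfext a)]
    have e1 : ∑ a : Fin K → Fin b, φ (valk b (ext a) k)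
        = ∑ a : Fin K → Fin b, φ ((finFunctionFinEquiv a : ℕ)) :=
      Finset.sum_congr rfl (fun a _ => by rw [hval a])
    rw [e1]
    rw [Fintype.sum_equiv finFunctionFinEquiv _ (fun v : Fin (b ^ K) => φ (v : ℕ))
      (fun a => rfl)]
    exact Fin.sum_univ_eq_sum_range (fun n => φ n) (b ^ K)
  rw [hsum]
  have hB : 0 < b ^ K := by positivity
  have hzero : ∑ n ∈ Finset.range (b ^ K), φ n = 0 := by
    have := sum_range_rotate (b ^ K) r hB (fun n => (digitSum b n : ℝ))
    simp only [hφ]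
    rw [Finset.sum_sub_distrib, this, sub_self]
  rw [hzero, mul_zero]

end IntegralZero

lemma cesaro_delta {b : ℕ} (hb : 2 ≤ b) (r : ℕ) :
    Tendsto (fun N : ℕ => (N : ℝ)⁻¹ * ∑ n ∈ Finset.range N, (delta b r n : ℝ)) atTop
      (𝓝 0) := by
  have hb1 : (1:ℝ) < b := by exact_mod_cast (by omega : 1 < b)
  have hlogb : 0 < Real.log b := Real.log_pos hb1
  set C0 : ℕ := ∑ n ∈ Finset.range r, digitSum b n with hC0
  -- step 1: telescoping identity
  have hsum : ∀ N : ℕ, ∑ n ∈ Finset.range N, delta b r n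
      = (∑ n ∈ Finset.Ico N (N + r), (digitSum b n : ℤ)) - (C0 : ℤ) := by
    intro N
    have e0 : ∑ n ∈ Finset.range N, delta b r n
        = (∑ n ∈ Finset.range N, (digitSum b (n + r) : ℤ))
          - ∑ n ∈ Finset.range N, (digitSum b n : ℤ) := by
      rw [← Finset.sum_sub_distrib]; rfl
    have e1 : ∑ n ∈ Finset.Ico r (r + N), (digitSum b n : ℤ)
        = ∑ n ∈ Finset.range N, (digitSum b (n + r) : ℤ) := by
      rw [Finset.sum_Ico_eq_sum_range]
      simp only [Nat.add_sub_cancel_left]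
      exact Finset.sum_congr rfl (fun i _ => by rw [Nat.add_comm r i])
    have h1 : (∑ n ∈ Finset.Ico 0 r, (digitSum b n : ℤ))
        + ∑ n ∈ Finset.Ico r (r + N), (digitSum b n : ℤ)
        = ∑ n ∈ Finset.Ico 0 (r + N), (digitSum b n : ℤ) :=
      Finset.sum_Ico_consecutive _ (Nat.zero_le r) (Nat.le_add_right r N)
    have h2 : (∑ n ∈ Finset.Ico 0 N, (digitSum b n : ℤ))
        + ∑ n ∈ Finset.Ico N (N + r), (digitSum b n : ℤ)
        = ∑ n ∈ Finset.Ico 0 (N + r), (digitSum b n : ℤ) :=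
      Finset.sum_Ico_consecutive _ (Nat.zero_le N) (Nat.le_add_right N r)
    have hrn : r + N = N + r := Nat.add_comm r N
    rw [hrn] at h1 e1
    have hr0 : ∑ n ∈ Finset.Ico 0 r, (digitSum b n : ℤ) = (C0 : ℤ) := by
      rw [← Finset.range_eq_Ico, hC0]
      push_cast
      rfl
    have hN0 : ∑ n ∈ Finset.Ico 0 N, (digitSum b n : ℤ)
        = ∑ n ∈ Finset.range N, (digitSum b n : ℤ) := by rw [← Finset.range_eq_Ico]
    rw [e0, ← e1]
    omega
  -- step 2: bound on the boundary sum
  have hbound : ∀ N : ℕ, (∑ n ∈ Finset.Ico N (N + r), (digitSum b n : ℤ))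
      ≤ (r * ((b - 1) * (Nat.log b (N + r) + 1)) : ℕ) ∧
      0 ≤ ∑ n ∈ Finset.Ico N (N + r), (digitSum b n : ℤ) := by
    intro N
    constructor
    · have hterm : ∀ n ∈ Finset.Ico N (N + r), digitSum b n
          ≤ (b - 1) * (Nat.log b (N + r) + 1) := by
        intro n hn
        have hn' := (Finset.mem_Ico.1 hn).2
        have hlt : n < b ^ (Nat.log b (N + r) + 1) :=
          lt_of_lt_of_le hn' (le_of_lt (Nat.lt_pow_succ_log_self (by omega) (N + r)))
        exact digitSum_le hb hlt
      have := Finset.sum_le_card_nsmul (Finset.Ico N (N + r)) (fun n => digitSum b n)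
        ((b - 1) * (Nat.log b (N + r) + 1)) hterm
      rw [Nat.card_Ico] at this
      have hcard : N + r - N = r := by omega
      rw [hcard, smul_eq_mul] at this
      exact_mod_cast this
    · exact Finset.sum_nonneg (fun n _ => Int.ofNat_nonneg _)
  -- step 3: real bound and squeeze
  set c1 : ℝ := ((r * (b - 1) : ℕ) : ℝ) with hc1
  have hc1nn : 0 ≤ c1 := Nat.cast_nonneg _
  set u : ℕ → ℝ := fun N =>
    (c1 * (Real.logb b ((N + r : ℕ) : ℝ) + 1) + (C0 : ℝ)) * (N : ℝ)⁻¹ with hu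
  have hle : ∀ N : ℕ, 1 ≤ N →
      ‖(N : ℝ)⁻¹ * ∑ n ∈ Finset.range N, (delta b r n : ℝ)‖ ≤ u N := by
    intro N hN
    have hNpos : (0:ℝ) < N := by exact_mod_cast hN
    have hcast : ∑ n ∈ Finset.range N, (delta b r n : ℝ)
        = ((∑ n ∈ Finset.range N, delta b r n : ℤ) : ℝ) := by push_cast; rfl
    rw [Real.norm_eq_abs, abs_mul, abs_of_pos (inv_pos.2 hNpos), hcast]
    have h1 := (hsum N)
    obtain ⟨h2, h3⟩ := hbound N
    have habs : |((∑ n ∈ Finset.range N, delta b r n : ℤ) : ℝ)|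
        ≤ ((r * ((b - 1) * (Nat.log b (N + r) + 1)) : ℕ) : ℝ) + (C0 : ℝ) := by
      rw [← Int.cast_abs]
      have : |∑ n ∈ Finset.range N, delta b r n|
          ≤ ((r * ((b - 1) * (Nat.log b (N + r) + 1)) : ℕ) : ℤ) + (C0 : ℤ) := by
        rw [h1, abs_sub_le_iff]
        have hC0nn : (0:ℤ) ≤ (C0 : ℤ) := Int.ofNat_nonneg _
        have h4 : (0:ℤ) ≤ ((r * ((b - 1) * (Nat.log b (N + r) + 1)) : ℕ) : ℤ) :=
          Int.ofNat_nonneg _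
        constructor
        · linarith
        · linarith
      exact_mod_cast this
    have hlog : ((r * ((b - 1) * (Nat.log b (N + r) + 1)) : ℕ) : ℝ)
        ≤ c1 * (Real.logb b ((N + r : ℕ) : ℝ) + 1) := by
      have hnat := Real.natLog_le_logb (N + r) b
      have hrb : (0:ℝ) ≤ ((r * (b - 1) : ℕ) : ℝ) := Nat.cast_nonneg _
      have hmul := mul_le_mul_of_nonneg_left (add_le_add_left hnat 1) hrb
      calc ((r * ((b - 1) * (Nat.log b (N + r) + 1)) : ℕ) : ℝ)
          = ((r * (b - 1) : ℕ) : ℝ) * ((Nat.log b (N + r) : ℝ) + 1) := by push_cast; ring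
        _ ≤ ((r * (b - 1) : ℕ) : ℝ) * (Real.logb b ((N + r : ℕ) : ℝ) + 1) := hmul
        _ = c1 * (Real.logb b ((N + r : ℕ) : ℝ) + 1) := by rw [hc1]
    calc (N:ℝ)⁻¹ * |((∑ n ∈ Finset.range N, delta b r n : ℤ) : ℝ)|
        = |((∑ n ∈ Finset.range N, delta b r n : ℤ) : ℝ)| * (N:ℝ)⁻¹ := mul_comm _ _
      _ ≤ (c1 * (Real.logb b ((N + r : ℕ) : ℝ) + 1) + (C0 : ℝ)) * (N : ℝ)⁻¹ :=
          mul_le_mul_of_nonneg_right (le_trans habs (by linarith))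
            (inv_nonneg.2 hNpos.le)
  -- step 4: the upper bound tends to zero
  have hA : Tendsto (fun N : ℕ => Real.log ((N + r : ℕ) : ℝ) * (N:ℝ)⁻¹) atTop (𝓝 0) := by
    have hg : Tendsto (fun N : ℕ => ((N + r : ℕ) : ℝ)) atTop atTop :=
      tendsto_natCast_atTop_atTop.comp (tendsto_add_atTop_nat r)
    have hlo : (fun N : ℕ => Real.log ((N + r : ℕ):ℝ)) =o[atTop]
        (fun N : ℕ => ((N + r : ℕ):ℝ)) := by
      have := Real.isLittleO_log_id_atTop.comp_tendsto hg
      exact this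
    have hO : (fun N : ℕ => ((N + r : ℕ):ℝ)) =O[atTop] (fun N : ℕ => (N:ℝ)) := by
      refine Asymptotics.isBigO_iff.2 ⟨(1 + r : ℝ), ?_⟩
      filter_upwards [eventually_ge_atTop 1] with N hN
      have h1 : (1:ℝ) ≤ (N:ℝ) := by exact_mod_cast hN
      rw [Real.norm_eq_abs, Real.norm_eq_abs,
        abs_of_nonneg (by positivity), abs_of_nonneg (by positivity)]
      push_cast
      nlinarith [(Nat.cast_nonneg r : (0:ℝ) ≤ (r:ℝ))]
    have hfin := (hlo.trans_isBigO hO).tendsto_div_nhds_zero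
    refine hfin.congr fun N => ?_
    rw [div_eq_mul_inv]
  have hB : Tendsto (fun N : ℕ => (N:ℝ)⁻¹) atTop (𝓝 0) :=
    tendsto_inv_atTop_nhds_zero_nat
  have hA' : Tendsto (fun N : ℕ => Real.logb b ((N + r : ℕ) : ℝ) * (N:ℝ)⁻¹) atTop (𝓝 0) := by
    have h := hA.const_mul (Real.log b)⁻¹
    simp only [mul_zero] at h
    refine h.congr fun N => ?_
    rw [Real.logb, div_eq_mul_inv]
    ring
  have htend : Tendsto u atTop (𝓝 0) := by
    have h := (hA'.const_mul c1).add (hB.const_mul (c1 + (C0:ℝ)))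
    simp only [mul_zero, add_zero] at h
    refine h.congr fun N => ?_
    rw [hu]
    ring
  refine squeeze_zero_norm' ?_ htend
  filter_upwards [eventually_ge_atTop 1] with N hN
  exact hle N hN

/-- For every `r ≥ 1`: (i) `|Δ^(r)|^j` is `ℙ`-integrable for every `j` (finite moments of all
orders); (ii) `∫ Δ^(r) dℙ = 0`; and (iii) `lim_N (1/N)·Σ_{n<N} (s(n+r) - s(n)) = 0`. -/
theorem delta_moments (b : ℕ) (hb : 2 ≤ b)
    (P : Measure (ℕ → Fin b))
    (hP : ∀ (k : ℕ) (a : ℕ → Fin b),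
      P {x | ∀ i < k, x i = a i} = (1 / (b : ENNReal)) ^ k)
    (r : ℕ) (hr : 1 ≤ r) :
    (∀ j : ℕ, Integrable (fun x => (|deltaX b r x| : ℝ) ^ j) P) ∧
    (∫ x, (deltaX b r x : ℝ) ∂P) = 0 ∧
    Tendsto (fun N : ℕ => (N : ℝ)⁻¹ * ∑ n ∈ Finset.range N, (delta b r n : ℝ)) atTop
      (𝓝 0) := by
  haveI : IsProbabilityMeasure P := ⟨prob_univ hb hP⟩
  have hG : ∀ᵐ x ∂P, (stopSet b r x).Nonempty := by
    rw [MeasureTheory.ae_iff]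
    exact stopSet_ae_nonempty hb hP r
  -- basic bound facts
  have hbnd : ∀ x : ℕ → Fin b, (stopSet b r x).Nonempty → ∀ k : ℕ,
      |((deltak b r k x : ℤ) : ℝ)| ≤ ((2 * b * (stopT b r x + 1) : ℕ) : ℝ) := by
    intro x hx k
    have h1 := abs_deltak_le_stopT hb hr hx k
    have h2 : |((deltak b r k x : ℤ) : ℝ)| ≤ ((2 * (b - 1 : ℕ) * (stopT b r x + 1) : ℤ) : ℝ) := by
      rw [← Int.cast_abs]
      exact_mod_cast h1
    refine h2.trans ?_
    have : ((2 * (b - 1 : ℕ) * (stopT b r x + 1) : ℤ) : ℝ)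
        = ((2 * (b - 1) * (stopT b r x + 1) : ℕ) : ℝ) := by push_cast; ring
    rw [this]
    have hle : (2 * (b - 1) * (stopT b r x + 1) : ℕ) ≤ (2 * b * (stopT b r x + 1) : ℕ) := by
      have : b - 1 ≤ b := by omega
      exact Nat.mul_le_mul_right _ (Nat.mul_le_mul_left _ this)
    exact_mod_cast hle
  refine ⟨?_, ?_, cesaro_delta hb r⟩
  · -- (i) all moments
    intro j
    have hae : (fun x => (|deltaX b r x| : ℝ) ^ j)
        =ᵐ[P] (fun x => ((|gfun b r x| : ℤ) : ℝ) ^ j) := by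
      filter_upwards [hG] with x hx
      rw [deltaX_eq_gfun hb hr hx, Int.cast_abs]
    have hmeasg : Measurable (fun x => ((|gfun b r x| : ℤ) : ℝ) ^ j) :=
      (measurable_from_top (f := fun z : ℤ => ((|z| : ℤ) : ℝ) ^ j)).comp (measurable_gfun b r)
    have hasm : AEStronglyMeasurable (fun x => (|deltaX b r x| : ℝ) ^ j) P :=
      hmeasg.aestronglyMeasurable.congr hae.symm
    refine (integrable_pow_stopT hb hP r j).mono' hasm ?_
    filter_upwards [hG] with x hx
    rw [Real.norm_eq_abs, deltaX_eq_gfun hb hr hx, abs_pow, abs_abs]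
    refine pow_le_pow_left₀ (abs_nonneg _) ?_ j
    have := hbnd x hx (stopT b r x)
    exact this
  · -- (ii) integral zero
    have hbint : Integrable (fun x => ((2 * b * (stopT b r x + 1) : ℕ) : ℝ)) P := by
      have := integrable_pow_stopT hb hP r 1
      simpa [pow_one] using this
    have hdct := MeasureTheory.tendsto_integral_of_dominated_convergence
      (F := fun k => fun x => ((deltak b r k x : ℤ) : ℝ))
      (f := fun x => ((deltaX b r x : ℤ) : ℝ))
      (bound := fun x => ((2 * b * (stopT b r x + 1) : ℕ) : ℝ))
      (fun k => ((measurable_from_top (f := fun z : ℤ => (z : ℝ))).comp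
        (measurable_deltak b r k)).aestronglyMeasurable)
      hbint
      (fun k => by
        filter_upwards [hG] with x hx
        rw [Real.norm_eq_abs]
        exact hbnd x hx k)
      (by
        filter_upwards [hG] with x hx
        rw [deltaX_eq_gfun hb hr hx]
        refine Tendsto.congr' ?_ (tendsto_const_nhds (x := ((gfun b r x : ℤ) : ℝ)))
        filter_upwards [eventually_ge_atTop (stopT b r x)] with m hm
        rw [deltak_eq_gfun hb hr hx hm])
    have hzero : Tendsto (fun k : ℕ => ∫ x, ((deltak b r k x : ℤ) : ℝ) ∂P) atTop (𝓝 0) := by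
      have : ∀ k : ℕ, ∫ x, ((deltak b r k x : ℤ) : ℝ) ∂P = 0 :=
        fun k => integral_deltak_eq_zero hb hP r k
      exact Tendsto.congr (fun k => (this k).symm) tendsto_const_nhds
    exact tendsto_nhds_unique hdct hzero
end
end

section
/- Let r ≥ 1 and let f : ℤ → ℂ be any function such that f∘Δ^(r) is ℙ-integrable on X. Then lim_{N→∞} (1/N)·Σ_{n<N} f(Δ^(r)(n)) = ∫_X f(Δ^(r)(x)) dℙ(x). -/
open Filter Topology MeasureTheory

noncomputable section

section Lemmas
variable {b : ℕ} (hb : 2 ≤ b)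

include hb in
lemma digitSum_eq {n : ℕ} (hn : n ≠ 0) : digitSum b n = n % b + digitSum b (n / b) := by
  unfold digitSum
  rw [Nat.digits_def' (by omega : 1 < b) (Nat.pos_of_ne_zero hn)]
  simp

include hb in
lemma digitSum_mul_pow_add : ∀ (k q t : ℕ), t < b ^ k →
    digitSum b (q * b ^ k + t) = digitSum b q + digitSum b t := by
  intro k
  induction k with
  | zero =>
    intro q t ht
    have : t = 0 := by simpa using ht
    simp [this, digitSum]
  | succ k ih =>
    intro q t ht
    rcases eq_or_ne (q * b ^ (k+1) + t) 0 with h0 | h0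
    · have hq : q = 0 := by
        have : b ^ (k+1) ≠ 0 := by positivity
        rcases Nat.eq_zero_of_add_eq_zero_right h0 with h
        exact mul_eq_zero.mp h |>.resolve_right this
      have htz : t = 0 := by omega
      simp [hq, htz, digitSum]
    · have hbpos : 0 < b := by omega
      have key : q * b ^ (k+1) + t = (t % b) + b * (q * b ^ k + t / b) := by
        have := Nat.mod_add_div t b
        ring_nf
        omega
      rw [digitSum_eq hb h0]
      have hmod : (q * b ^ (k+1) + t) % b = t % b := by
        conv_lhs => rw [key]
        rw [Nat.add_mul_mod_self_left, Nat.mod_mod_of_dvd _ dvd_rfl]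
      have hdiv : (q * b ^ (k+1) + t) / b = q * b ^ k + t / b := by
        conv_lhs => rw [key]
        rw [Nat.add_mul_div_left _ _ hbpos]
        have : t % b < b := Nat.mod_lt _ hbpos
        rw [Nat.div_eq_of_lt this]
        omega
      have htb : t / b < b ^ k := by
        apply Nat.div_lt_of_lt_mul
        rw [mul_comm]
        simpa [pow_succ] using ht
      rw [hmod, hdiv, ih q (t / b) htb]
      rcases eq_or_ne t 0 with rfl | htne
      · simp
      · rw [digitSum_eq hb htne]; ring
end Lemmas

section Lemmas
variable {b : ℕ} (hb : 2 ≤ b)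

def pval (b : ℕ) (x : ℕ → Fin b) (K : ℕ) : ℕ := ∑ i ∈ Finset.range K, (x i : ℕ) * b ^ i

lemma pval_lt (hb : 1 ≤ b) (x : ℕ → Fin b) : ∀ K, pval b x K < b ^ K := by
  intro K
  induction K with
  | zero => simp [pval]
  | succ K ih =>
    have hx : (x K : ℕ) ≤ b - 1 := by have := (x K).isLt; omega
    have : pval b x (K+1) = pval b x K + (x K : ℕ) * b ^ K := by
      simp [pval, Finset.sum_range_succ]
    have h2 : (x K : ℕ) * b ^ K ≤ (b - 1) * b ^ K := Nat.mul_le_mul_right _ hx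
    calc pval b x (K+1) = pval b x K + (x K : ℕ) * b ^ K := this
      _ < b ^ K + (x K : ℕ) * b ^ K := Nat.add_lt_add_right ih _
      _ ≤ b ^ K + (b - 1) * b ^ K := Nat.add_le_add_left h2 _
      _ = (1 + (b - 1)) * b ^ K := by ring
      _ = b ^ (K + 1) := by rw [(by omega : 1 + (b - 1) = b), pow_succ, mul_comm]

lemma pval_split (x : ℕ → Fin b) (K t : ℕ) :
    pval b x (K + t) = pval b x K + (∑ i ∈ Finset.range t, (x (K + i) : ℕ) * b ^ i) * b ^ K := by
  unfold pval
  rw [Finset.sum_range_add, Finset.sum_mul]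
  congr 1
  refine Finset.sum_congr rfl fun i _ => ?_
  rw [pow_add]
  ring

lemma pval_mod (hb : 1 ≤ b) (x : ℕ → Fin b) {K L : ℕ} (h : K ≤ L) :
    pval b x L % b ^ K = pval b x K := by
  obtain ⟨t, rfl⟩ := Nat.exists_eq_add_of_le h
  rw [pval_split, Nat.add_mul_mod_self_right, Nat.mod_eq_of_lt (pval_lt hb x K)]

lemma pval_succ_shift (x : ℕ → Fin b) (K : ℕ) :
    pval b x (K + 1) = (x 0 : ℕ) + b * pval b (fun i => x (i + 1)) K := by
  unfold pval
  rw [Finset.sum_range_succ', Finset.mul_sum]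
  simp only [pow_zero, mul_one]
  rw [add_comm]
  congr 1
  refine Finset.sum_congr rfl fun i _ => by rw [pow_succ]; ring

lemma pval_inj (hb : 1 ≤ b) : ∀ (K : ℕ) (x y : ℕ → Fin b),
    pval b x K = pval b y K → ∀ i < K, x i = y i := by
  intro K
  induction K with
  | zero => intro x y _ i hi; omega
  | succ K ih =>
    intro x y h i hi
    rw [pval_succ_shift, pval_succ_shift] at h
    have hx0 : (x 0 : ℕ) < b := (x 0).isLt
    have hy0 : (y 0 : ℕ) < b := (y 0).isLt
    have h0 : (x 0 : ℕ) = (y 0 : ℕ) := by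
      have := congrArg (· % b) h
      simpa [Nat.add_mul_mod_self_left, Nat.mod_eq_of_lt hx0, Nat.mod_eq_of_lt hy0] using this
    have h1 : pval b (fun i => x (i+1)) K = pval b (fun i => y (i+1)) K := by
      have e1 : ((x 0 : ℕ) + b * pval b (fun i => x (i+1)) K) / b
          = pval b (fun i => x (i+1)) K := by
        rw [Nat.add_mul_div_left _ _ (by omega : 0 < b), Nat.div_eq_of_lt hx0, Nat.zero_add]
      have e2 : ((y 0 : ℕ) + b * pval b (fun i => y (i+1)) K) / b
          = pval b (fun i => y (i+1)) K := by
        rw [Nat.add_mul_div_left _ _ (by omega : 0 < b), Nat.div_eq_of_lt hy0, Nat.zero_add]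
      rw [← e1, ← e2, h]
    rcases Nat.eq_zero_or_pos i with rfl | hip
    · exact Fin.ext h0
    · obtain ⟨j, rfl⟩ := Nat.exists_eq_add_of_le hip
      have := ih (fun i => x (i+1)) (fun i => y (i+1)) h1 j (by omega)
      simpa [Nat.add_comm] using this

lemma pval_digits (hb : 1 ≤ b) : ∀ (K m : ℕ), m < b ^ K →
    pval b (fun i => (⟨m / b ^ i % b, Nat.mod_lt _ hb⟩ : Fin b)) K = m := by
  intro K
  induction K with
  | zero =>
    intro m hm
    simp only [pow_zero] at hm
    simp [pval]
    omega
  | succ K ih =>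
    intro m hm
    rw [pval_succ_shift]
    have hdb : m / b < b ^ K := by
      apply Nat.div_lt_of_lt_mul; rw [mul_comm]; simpa [pow_succ] using hm
    have := ih (m / b) hdb
    simp only [pow_zero, Nat.div_one]
    have heq : (fun i => (⟨m / b ^ (i+1) % b, Nat.mod_lt _ hb⟩ : Fin b))
        = (fun i => (⟨(m / b) / b ^ i % b, Nat.mod_lt _ hb⟩ : Fin b)) := by
      funext i; congr 1; rw [Nat.div_div_eq_div_mul, pow_succ']
    rw [heq, this]
    exact Nat.mod_add_div m b

lemma exists_digit_fun (hb : 1 ≤ b) (K m : ℕ) (hm : m < b ^ K) :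
    ∃ a : ℕ → Fin b, ∀ x : ℕ → Fin b, pval b x K = m ↔ ∀ i < K, x i = a i := by
  refine ⟨fun i => (⟨m / b ^ i % b, Nat.mod_lt _ hb⟩ : Fin b), fun x => ⟨fun h => ?_, fun h => ?_⟩⟩
  · exact pval_inj hb K x _ (by rw [h, pval_digits hb K m hm]) 
  · rw [← pval_digits hb K m hm]
    unfold pval
    exact Finset.sum_congr rfl fun i hi => by rw [h i (Finset.mem_range.mp hi)]

end Lemmas

section Lemmas3
variable {b : ℕ}
lemma valk_eq_pval (x : ℕ → Fin b) (k : ℕ) : valk b x k = pval b x (k + 1) := rfl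

lemma sum_fin_lt (hb : 1 ≤ b) (c : ℕ → Fin b) (t : ℕ) :
    (∑ i ∈ Finset.range t, (c i : ℕ) * b ^ i) < b ^ t := pval_lt hb c t

lemma deltaX_eq (hb : 2 ≤ b) {r : ℕ} {K : ℕ} (x : ℕ → Fin b)
    (h : pval b x K + r < b ^ K) : deltaX b r x = delta b r (pval b x K) := by
  have hb1 : (1:ℕ) ≤ b := by omega
  have key : ∀ j, K ≤ j + 1 → deltak b r j x = delta b r (pval b x K) := by
    intro j hj
    obtain ⟨t, ht⟩ := Nat.exists_eq_add_of_le hj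
    set m := pval b x K with hm
    set Q := ∑ i ∈ Finset.range t, (x (K + i) : ℕ) * b ^ i with hQ
    have hsplit : valk b x j = Q * b ^ K + m := by
      rw [valk_eq_pval, ht, pval_split]; ring
    have hQlt : Q < b ^ t := sum_fin_lt hb1 _ t
    have hlt1 : Q * b ^ K + (m + r) < b ^ (j + 1) := by
      have h1 : Q * b ^ K + (m + r) < Q * b ^ K + b ^ K := by omega
      have h2 : Q * b ^ K + b ^ K = (Q + 1) * b ^ K := by ring
      have h3 : (Q + 1) * b ^ K ≤ b ^ t * b ^ K := Nat.mul_le_mul_right _ (by omega)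
      have h4 : b ^ t * b ^ K = b ^ (j + 1) := by rw [← pow_add, ht]; ring_nf
      omega
    have hmlt : m < b ^ K := pval_lt hb1 x K
    have hmod : (valk b x j + r) % b ^ (j + 1) = Q * b ^ K + (m + r) := by
      rw [hsplit]
      rw [Nat.mod_eq_of_lt (by omega)]
      omega
    unfold deltak
    rw [hmod, hsplit]
    rw [digitSum_mul_pow_add hb K Q (m + r) h, digitSum_mul_pow_add hb K Q m hmlt]
    unfold delta
    push_cast
    ring
  have : Tendsto (fun j => deltak b r j x) atTop (𝓝 (delta b r (pval b x K))) := by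
    apply Tendsto.congr' _ tendsto_const_nhds
    filter_upwards [eventually_ge_atTop K] with j hj
    exact (key j (by omega)).symm
  exact this.limUnder_eq

lemma delta_mod (hb : 2 ≤ b) {r : ℕ} (k n : ℕ) (h : n % b ^ k + r < b ^ k) :
    delta b r n = delta b r (n % b ^ k) := by
  have hdm : (n / b ^ k) * b ^ k + n % b ^ k = n := Nat.div_add_mod' n (b ^ k)
  have h1 : n + r = (n / b ^ k) * b ^ k + (n % b ^ k + r) := by omega
  have h2 : n = (n / b ^ k) * b ^ k + (n % b ^ k) := by omega
  have hmlt : n % b ^ k < b ^ k := by omega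
  have e1 : digitSum b (n + r) = digitSum b (n / b ^ k) + digitSum b (n % b ^ k + r) := by
    rw [h1]; exact digitSum_mul_pow_add hb k _ _ h
  have e2 : digitSum b n = digitSum b (n / b ^ k) + digitSum b (n % b ^ k) := by
    conv_lhs => rw [h2]
    exact digitSum_mul_pow_add hb k _ _ hmlt
  unfold delta
  rw [e1, e2]
  push_cast
  ring

lemma bad_mod {r : ℕ} {s t : ℕ} (hb : 1 ≤ b) (h : s ≤ t) (y : ℕ)
    (hbad : b ^ t ≤ y % b ^ t + r) : b ^ s ≤ y % b ^ s + r := by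
  by_contra hcon
  push_neg at hcon
  set z := y % b ^ t with hz
  have hzlt : z < b ^ t := Nat.mod_lt _ (by positivity)
  have hzs : z % b ^ s = y % b ^ s := Nat.mod_mod_of_dvd _ (pow_dvd_pow b h)
  have hdiv : z / b ^ s < b ^ (t - s) := by
    apply Nat.div_lt_of_lt_mul
    rw [← pow_add]
    rw [(by omega : s + (t - s) = t)]
    exact hzlt
  have hzeq : z = b ^ s * (z / b ^ s) + z % b ^ s := (Nat.div_add_mod z (b ^ s)).symm
  have hle : b ^ s * (z / b ^ s) ≤ b ^ s * (b ^ (t - s) - 1) := Nat.mul_le_mul_left _ (by omega)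
  have heq : b ^ s * (b ^ (t - s) - 1) + b ^ s = b ^ t := by
    rw [Nat.mul_sub, mul_one, ← pow_add, (by omega : s + (t - s) = t)]
    have : b ^ s ≤ b ^ t := Nat.pow_le_pow_right hb h
    omega
  omega
end Lemmas3

section Count

lemma card_fiber_le (N p m : ℕ) (hp : 1 ≤ p) :
    ((Finset.range N).filter (fun n => n % p = m)).card ≤ N / p + 1 := by
  have : ((Finset.range N).filter (fun n => n % p = m)).card ≤ (Finset.range (N / p + 1)).card := by
    apply Finset.card_le_card_of_injOn (fun n => n / p)
    · intro n hn
      simp only [Finset.mem_coe, Finset.mem_filter, Finset.mem_range] at hn ⊢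
      have h2 : n / p ≤ N / p := Nat.div_le_div_right (le_of_lt hn.1)
      omega
    · intro n1 h1 n2 h2 he
      simp only [Finset.coe_filter, Finset.mem_range, Set.mem_setOf_eq] at h1 h2
      have e1 := Nat.div_add_mod n1 p
      have e2 := Nat.div_add_mod n2 p
      have hm12 : n1 % p = n2 % p := by rw [h1.2, h2.2]
      have he' : n1 / p = n2 / p := he
      have e3 : p * (n1 / p) = p * (n2 / p) := by rw [he']
      omega
  simpa using this

lemma card_fiber_ge (N p m : ℕ) (hm : m < p) :
    N / p ≤ ((Finset.range N).filter (fun n => n % p = m)).card := by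
  have : (Finset.range (N / p)).card ≤ ((Finset.range N).filter (fun n => n % p = m)).card := by
    apply Finset.card_le_card_of_injOn (fun j => m + j * p)
    · intro j hj
      simp only [Finset.mem_coe, Finset.mem_range] at hj
      simp only [Finset.mem_coe, Finset.mem_filter, Finset.mem_range]
      constructor
      · have h1 : m + j * p < (j + 1) * p := by
          have : (j+1) * p = j * p + p := by ring
          omega
        have h2 : (j + 1) * p ≤ (N / p) * p := Nat.mul_le_mul_right _ (by omega)
        have h3 : (N / p) * p ≤ N := Nat.div_mul_le_self N p
        omega
      · rw [Nat.add_mul_mod_self_right, Nat.mod_eq_of_lt hm]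
    · intro j1 h1 j2 h2 he
      simp only at he
      have hp : 0 < p := by omega
      exact Nat.eq_of_mul_eq_mul_right hp (by omega)
  simpa using this

lemma sum_mod_fiber {M : Type*} [AddCommMonoid M] (φ : ℕ → M) (N p : ℕ) (hp : 1 ≤ p) :
    ∑ n ∈ Finset.range N, φ (n % p)
      = ∑ m ∈ Finset.range p, ((Finset.range N).filter (fun n => n % p = m)).card • φ m := by
  rw [← Finset.sum_fiberwise_of_maps_to (g := fun n => n % p) (t := Finset.range p)
    (fun n _ => Finset.mem_range.mpr (Nat.mod_lt _ (by omega))) (fun n => φ (n % p))]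
  refine Finset.sum_congr rfl fun m hm => ?_
  have hc : ∀ n ∈ (Finset.range N).filter (fun n => n % p = m), φ (n % p) = φ m := by
    intro n hn
    simp only [Finset.mem_filter] at hn
    rw [hn.2]
  rw [Finset.sum_congr rfl hc, Finset.sum_const]

lemma tendsto_avg_periodic (φ : ℕ → ℂ) (p : ℕ) (hp : 1 ≤ p) :
    Tendsto (fun N : ℕ => (N : ℂ)⁻¹ * ∑ n ∈ Finset.range N, φ (n % p)) atTop
      (𝓝 ((p : ℂ)⁻¹ * ∑ m ∈ Finset.range p, φ m)) := by
  set L := (p : ℂ)⁻¹ * ∑ m ∈ Finset.range p, φ m with hL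
  rw [← tendsto_sub_nhds_zero_iff]
  apply squeeze_zero_norm' (a := fun N : ℕ => (∑ m ∈ Finset.range p, (‖φ m‖ + ‖φ m‖)) / N)
  · filter_upwards [eventually_ge_atTop 1] with N hN
    have hN0 : (0:ℝ) < N := by exact_mod_cast hN
    have hNC : (N:ℂ) ≠ 0 := by exact_mod_cast (by omega : N ≠ 0)
    have hpC : (p:ℂ) ≠ 0 := by exact_mod_cast (by omega : p ≠ 0)
    set c : ℕ → ℕ := fun m => ((Finset.range N).filter (fun n => n % p = m)).card with hc
    have hsum : ∑ n ∈ Finset.range N, φ (n % p) = ∑ m ∈ Finset.range p, (c m : ℂ) * φ m := by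
      rw [sum_mod_fiber φ N p hp]
      exact Finset.sum_congr rfl fun m _ => by rw [nsmul_eq_mul]
    have hdiff : (N : ℂ)⁻¹ * ∑ n ∈ Finset.range N, φ (n % p) - L
        = ∑ m ∈ Finset.range p, ((c m : ℂ) / N - 1 / p) * φ m := by
      rw [hsum, hL, Finset.mul_sum, Finset.mul_sum, ← Finset.sum_sub_distrib]
      refine Finset.sum_congr rfl fun m _ => ?_
      field_simp
    rw [hdiff]
    calc ‖∑ m ∈ Finset.range p, ((c m : ℂ) / N - 1 / p) * φ m‖
        ≤ ∑ m ∈ Finset.range p, ‖((c m : ℂ) / N - 1 / p) * φ m‖ := norm_sum_le _ _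
      _ ≤ ∑ m ∈ Finset.range p, (‖φ m‖ + ‖φ m‖) / N := by
          apply Finset.sum_le_sum
          intro m hm
          rw [norm_mul]
          have hp0 : (0:ℝ) < p := by exact_mod_cast hp
          have hcm : ‖((c m : ℂ) / N - 1 / p)‖ ≤ 2 / N := by
            have hre : ((c m : ℂ) / N - 1 / p) = (((c m : ℝ) / N - 1 / p : ℝ) : ℂ) := by
              push_cast; ring
            rw [hre, Complex.norm_real, Real.norm_eq_abs]
            have hnat1 : c m ≤ N / p + 1 := card_fiber_le N p m hp
            have hnat2 : N / p ≤ c m := card_fiber_ge N p m (Finset.mem_range.mp hm)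
            have hr1 : ((N / p : ℕ) : ℝ) ≤ (N:ℝ) / p := Nat.cast_div_le
            have hr2 : (N:ℝ) < p * ((N / p : ℕ) : ℝ) + p := by
              have e := Nat.div_add_mod N p
              have hmo : N % p < p := Nat.mod_lt _ (by omega)
              exact_mod_cast (by omega : N < p * (N / p) + p)
            have hr3 : (N:ℝ) / p < ((N / p : ℕ) : ℝ) + 1 := by
              rw [div_lt_iff₀ hp0]; nlinarith
            have key : |(c m : ℝ) - (N:ℝ)/p| ≤ 1 := by
              rw [abs_le]
              constructor
              · have : ((c m : ℕ) : ℝ) ≥ ((N / p : ℕ) : ℝ) := by exact_mod_cast hnat2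
                nlinarith
              · have : ((c m : ℕ) : ℝ) ≤ ((N / p : ℕ) : ℝ) + 1 := by exact_mod_cast hnat1
                nlinarith
            have hNne : (N:ℝ) ≠ 0 := by positivity
            have haux : (N:ℝ)/p/N = 1/p := by
              rw [div_right_comm, div_self hNne]
            have heq2 : (c m : ℝ)/N - 1/p = ((c m : ℝ) - (N:ℝ)/p)/N := by
              rw [sub_div, haux]
            rw [heq2, abs_div, abs_of_pos hN0, div_le_div_iff_of_pos_right hN0]
            linarith
          calc ‖((c m : ℂ) / N - 1 / p)‖ * ‖φ m‖ ≤ (2 / N) * ‖φ m‖ :=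
            mul_le_mul_of_nonneg_right hcm (norm_nonneg _)
            _ = (‖φ m‖ + ‖φ m‖) / N := by ring
      _ = (∑ m ∈ Finset.range p, (‖φ m‖ + ‖φ m‖)) / N := by rw [Finset.sum_div]
  · exact tendsto_const_div_atTop_nhds_zero_nat _
end Count

section MeasPart
variable {b : ℕ} {P : Measure (ℕ → Fin b)} {r : ℕ} {f : ℤ → ℂ}

lemma measurable_pval (K : ℕ) : Measurable fun x : ℕ → Fin b => pval b x K := by
  apply Finset.measurable_sum
  intro i _
  exact (measurable_of_countable (fun v : Fin b => (v : ℕ) * b ^ i)).comp (measurable_pi_apply i)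

lemma measurableSet_pval_eq (K m : ℕ) : MeasurableSet {x : ℕ → Fin b | pval b x K = m} :=
  measurable_pval K (measurableSet_singleton m)

lemma measurableSet_pval_prop (p : ℕ → Prop) (K : ℕ) :
    MeasurableSet {x : ℕ → Fin b | p (pval b x K)} :=
  measurable_pval K (MeasurableSpace.measurableSet_top)

variable (hb : 2 ≤ b)
  (hP : ∀ (k : ℕ) (a : ℕ → Fin b), P {x | ∀ i < k, x i = a i} = (1 / (b : ENNReal)) ^ k)

include hb hP in
lemma P_pval_eq {K m : ℕ} (hm : m < b ^ K) :
    P {x : ℕ → Fin b | pval b x K = m} = (1 / (b : ENNReal)) ^ K := by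
  obtain ⟨a, ha⟩ := exists_digit_fun (by omega : 1 ≤ b) K m hm
  have : {x : ℕ → Fin b | pval b x K = m} = {x | ∀ i < K, x i = a i} := by
    ext x; exact ha x
  rw [this, hP]

include hb hP in
lemma P_pval_toReal {K m : ℕ} (hm : m < b ^ K) :
    (P {x : ℕ → Fin b | pval b x K = m}).toReal = ((b : ℝ) ^ K)⁻¹ := by
  rw [P_pval_eq hb hP hm]
  rw [ENNReal.toReal_pow, ENNReal.toReal_div, ENNReal.toReal_one, ENNReal.toReal_natCast]
  rw [one_div, inv_pow]

include hb hP in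
lemma P_pval_mem (K : ℕ) (M : Finset ℕ) (hM : ∀ m ∈ M, m < b ^ K) :
    P {x : ℕ → Fin b | pval b x K ∈ M} = M.card * (1 / (b : ENNReal)) ^ K := by
  have : {x : ℕ → Fin b | pval b x K ∈ M} = ⋃ m ∈ M, {x | pval b x K = m} := by
    ext x; simp
  rw [this, measure_biUnion_finset ?disj (fun m _ => measurableSet_pval_eq K m)]
  · rw [Finset.sum_congr rfl (fun m hm => P_pval_eq hb hP (hM m hm))]
    simp [Finset.sum_const, nsmul_eq_mul]
  case disj =>
    intro m1 _ m2 _ hne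
    apply Set.disjoint_left.mpr
    intro x h1 h2
    exact hne (h1.symm.trans h2)

include hb hP in
lemma integral_Gset (hr : 1 ≤ r) (K : ℕ)
    (hf : Integrable (fun x => f (deltaX b r x)) P) :
    ∫ x in {x : ℕ → Fin b | pval b x K + r < b ^ K}, f (deltaX b r x) ∂P
      = ∑ m ∈ (Finset.range (b ^ K)).filter (fun m => m + r < b ^ K),
          ((b : ℝ) ^ K)⁻¹ • f (delta b r m) := by
  have hb1 : (1:ℕ) ≤ b := by omega
  set M := (Finset.range (b ^ K)).filter (fun m => m + r < b ^ K) with hM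
  have hset : {x : ℕ → Fin b | pval b x K + r < b ^ K}
      = ⋃ m ∈ M, {x | pval b x K = m} := by
    ext x
    simp only [Set.mem_setOf_eq, Set.mem_iUnion, hM, Finset.mem_filter, Finset.mem_range]
    constructor
    · intro h; exact ⟨pval b x K, ⟨pval_lt hb1 x K, h⟩, rfl⟩
    · rintro ⟨m, ⟨_, hm2⟩, rfl⟩; exact hm2
  rw [hset, integral_biUnion_finset M (fun m _ => measurableSet_pval_eq K m)
    ?disj (fun m _ => hf.integrableOn)]
  · refine Finset.sum_congr rfl fun m hm => ?_
    rw [hM, Finset.mem_filter, Finset.mem_range] at hm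
    have : ∫ x in {x : ℕ → Fin b | pval b x K = m}, f (deltaX b r x) ∂P
        = ∫ _ in {x : ℕ → Fin b | pval b x K = m}, f (delta b r m) ∂P := by
      apply setIntegral_congr_fun (measurableSet_pval_eq K m)
      intro x hx
      simp only [Set.mem_setOf_eq] at hx
      simp only
      rw [deltaX_eq hb x (by rw [hx]; exact hm.2), hx]
    rw [this, setIntegral_const, measureReal_def, P_pval_toReal hb hP hm.1]
  case disj =>
    intro m1 _ m2 _ hne
    apply Set.disjoint_left.mpr
    intro x h1 h2
    exact hne (h1.symm.trans h2)
end MeasPart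

section Pairs
variable {b : ℕ} {P : Measure (ℕ → Fin b)} {r : ℕ} {f : ℤ → ℂ}
variable (hb : 2 ≤ b)
  (hP : ∀ (k : ℕ) (a : ℕ → Fin b), P {x | ∀ i < k, x i = a i} = (1 / (b : ENNReal)) ^ k)

/-- Bad residues at scale `k'`: residues mod `b^k'` that are good at `k'` but bad at `k'-1`. -/
def Bfin (b r k' : ℕ) : Finset ℕ :=
  (Finset.range (b ^ k')).filter
    (fun m => m + r < b ^ k' ∧ b ^ (k' - 1) ≤ m % b ^ (k' - 1) + r)

include hb hP in
lemma sum_pairs_le (hr : 1 ≤ r) (hf : Integrable (fun x => f (deltaX b r x)) P)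
    (S : Finset ℕ) :
    ∑ k' ∈ S, ∑ m ∈ Bfin b r k', ((b : ℝ) ^ (k' + 1))⁻¹ * ‖f (delta b r m)‖
      ≤ ∫ x, ‖f (deltaX b r x)‖ ∂P := by
  have hb1 : (1:ℕ) ≤ b := by omega
  set g := fun x : ℕ → Fin b => ‖f (deltaX b r x)‖ with hg
  set D : (_ : ℕ) × ℕ → Set (ℕ → Fin b) :=
    fun p => {x | pval b x (p.1 + 1) = p.2} with hD
  set Pairs := S.sigma (fun k' => Bfin b r k') with hPairs
  have hBmem : ∀ {k' m}, m ∈ Bfin b r k' →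
      m < b ^ k' ∧ m + r < b ^ k' ∧ b ^ (k' - 1) ≤ m % b ^ (k' - 1) + r := by
    intro k' m hm
    simp only [Bfin, Finset.mem_filter, Finset.mem_range] at hm
    exact ⟨hm.1, hm.2.1, hm.2.2⟩
  have hk'pos : ∀ {k' m}, m ∈ Bfin b r k' → 1 ≤ k' := by
    intro k' m hm
    rcases Nat.eq_zero_or_pos k' with rfl | h
    · exact absurd (hBmem hm).2.1 (by simp; omega)
    · exact h
  have hdisj : (↑Pairs : Set ((_ : ℕ) × ℕ)).Pairwise (Function.onFun Disjoint D) := by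
    intro p1 hp1 p2 hp2 hne
    simp only [hPairs, Finset.coe_sigma, Set.mem_sigma_iff] at hp1 hp2
    obtain ⟨k1, m1⟩ := p1
    obtain ⟨k2, m2⟩ := p2
    have hm1 := hBmem hp1.2
    have hm2 := hBmem hp2.2
    -- key: if k1 < k2, contradiction for common point
    have key : ∀ (k1 k2 m1 m2 : ℕ), k1 < k2 →
        (m1 + r < b ^ k1) → (b ^ (k2 - 1) ≤ m2 % b ^ (k2 - 1) + r) →
        Disjoint {x : ℕ → Fin b | pval b x (k1 + 1) = m1}
          {x | pval b x (k2 + 1) = m2} := by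
      intro k1 k2 m1 m2 hlt h1 h2
      apply Set.disjoint_left.mpr
      intro x hx1 hx2
      simp only [Set.mem_setOf_eq] at hx1 hx2
      have hb2 : b ^ (k1 - 0) ≤ m2 % b ^ k1 + r :=
        bad_mod hb1 (by omega : k1 ≤ k2 - 1) m2 h2
      simp only [Nat.sub_zero] at hb2
      have e1 : m2 % b ^ k1 = pval b x k1 := by
        rw [← hx2, pval_mod hb1 x (by omega : k1 ≤ k2 + 1)]
      have e2 : pval b x k1 = m1 := by
        have : pval b x (k1 + 1) % b ^ k1 = pval b x k1 := pval_mod hb1 x (by omega)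
        rw [hx1] at this
        rw [← this, Nat.mod_eq_of_lt (by omega : m1 < b ^ k1)]
      omega
    rcases lt_trichotomy k1 k2 with h | h | h
    · exact key k1 k2 m1 m2 h hm1.2.1 hm2.2.2
    · subst h
      have hne' : m1 ≠ m2 := by
        intro hmm; exact hne (by rw [hmm])
      apply Set.disjoint_left.mpr
      intro x hx1 hx2
      exact hne' (hx1.symm.trans hx2)
    · exact (key k2 k1 m2 m1 h hm2.2.1 hm1.2.2).symm
  have hmeas : ∀ p ∈ Pairs, MeasurableSet (D p) := fun p _ => measurableSet_pval_eq _ _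
  have hint : ∀ p ∈ Pairs, IntegrableOn g (D p) P := fun p _ => hf.norm.integrableOn
  have heach : ∀ p ∈ Pairs, ∫ x in D p, g x ∂P
      = ((b : ℝ) ^ (p.1 + 1))⁻¹ * ‖f (delta b r p.2)‖ := by
    rintro ⟨k', m⟩ hp
    simp only [hPairs, Finset.mem_sigma] at hp
    have hm := hBmem hp.2
    have hgood : m + r < b ^ (k' + 1) := by
      have : b ^ k' ≤ b ^ (k' + 1) := Nat.pow_le_pow_right hb1 (by omega)
      omega
    have : ∫ x in D (⟨k', m⟩ : (_ : ℕ) × ℕ), g x ∂P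
        = ∫ _ in D (⟨k', m⟩ : (_ : ℕ) × ℕ), ‖f (delta b r m)‖ ∂P := by
      apply setIntegral_congr_fun (measurableSet_pval_eq _ _)
      intro x hx
      simp only [hD, Set.mem_setOf_eq] at hx
      simp only [hg]
      rw [deltaX_eq hb x (by rw [hx]; exact hgood), hx]
    rw [this, setIntegral_const, measureReal_def, P_pval_toReal hb hP
      (by
        have : b ^ k' ≤ b ^ (k' + 1) := Nat.pow_le_pow_right hb1 (by omega)
        omega : m < b ^ (k' + 1)), smul_eq_mul]
  calc ∑ k' ∈ S, ∑ m ∈ Bfin b r k', ((b : ℝ) ^ (k' + 1))⁻¹ * ‖f (delta b r m)‖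
      = ∑ p ∈ Pairs, ((b : ℝ) ^ (p.1 + 1))⁻¹ * ‖f (delta b r p.2)‖ := by
        rw [hPairs, Finset.sum_sigma]
    _ = ∑ p ∈ Pairs, ∫ x in D p, g x ∂P := by
        exact (Finset.sum_congr rfl heach).symm
    _ = ∫ x in ⋃ p ∈ Pairs, D p, g x ∂P :=
        (integral_biUnion_finset Pairs hmeas hdisj hint).symm
    _ ≤ ∫ x, g x ∂P := by
        apply setIntegral_le_integral hf.norm
        exact Filter.Eventually.of_forall (fun x => norm_nonneg _)
end Pairs

section NullSet
variable {b : ℕ} {P : Measure (ℕ → Fin b)} {r : ℕ} {f : ℤ → ℂ}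
variable (hb : 2 ≤ b)
  (hP : ∀ (k : ℕ) (a : ℕ → Fin b), P {x | ∀ i < k, x i = a i} = (1 / (b : ENNReal)) ^ k)

lemma geo_sum (hb1 : 1 ≤ b) : ∀ j, ∑ i ∈ Finset.range j, (b - 1) * b ^ i = b ^ j - 1 := by
  intro j
  induction j with
  | zero => simp
  | succ j ih =>
    rw [Finset.sum_range_succ, ih]
    have h1 : (b - 1) * b ^ j + b ^ j = b * b ^ j := by
      rw [← add_one_mul]
      congr 1
      omega
    have h2 : b ^ (j + 1) = b * b ^ j := by rw [pow_succ]; ring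
    have h3 : 1 ≤ b ^ j := Nat.one_le_pow _ _ (by omega)
    omega

include hb in
lemma Gset_mono {K : ℕ} {x : ℕ → Fin b} (h : pval b x K + r < b ^ K) :
    pval b x (K + 1) + r < b ^ (K + 1) := by
  have hx : (x K : ℕ) ≤ b - 1 := by have := (x K).isLt; omega
  have hsp : pval b x (K + 1) = pval b x K + (x K : ℕ) * b ^ K := by
    simp [pval, Finset.sum_range_succ]
  have h1 : (x K : ℕ) * b ^ K ≤ (b - 1) * b ^ K := Nat.mul_le_mul_right _ hx
  have h2 : (b - 1) * b ^ K + b ^ K = b * b ^ K := by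
    rw [← add_one_mul]; congr 1; omega
  have h3 : b ^ (K + 1) = b * b ^ K := by rw [pow_succ]; ring
  omega

include hb hP in
lemma P_bad_zero (hr : 1 ≤ r) :
    P (⋂ K, {x : ℕ → Fin b | pval b x K + r < b ^ K}ᶜ) = 0 := by
  have hb1 : (1:ℕ) ≤ b := by omega
  set Bad := ⋂ K, {x : ℕ → Fin b | pval b x K + r < b ^ K}ᶜ with hBad
  have hri : r ≤ b ^ r := le_of_lt (lt_of_lt_of_le (Nat.lt_two_pow_self (n := r)) (Nat.pow_le_pow_left hb r))
  -- all digits ≥ r are b-1 on Bad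
  have hdig : ∀ x ∈ Bad, ∀ i, r ≤ i → (x i : ℕ) = b - 1 := by
    intro x hx i hi
    by_contra hcon
    have hxi : (x i : ℕ) ≤ b - 2 := by have := (x i).isLt; omega
    have hbadK : ¬ (pval b x (i+1) + r < b ^ (i+1)) := Set.mem_iInter.mp hx (i+1)
    apply hbadK
    have hsp : pval b x (i + 1) = pval b x i + (x i : ℕ) * b ^ i := by
      simp [pval, Finset.sum_range_succ]
    have h1 : (x i : ℕ) * b ^ i ≤ (b - 2) * b ^ i := Nat.mul_le_mul_right _ hxi
    have h2 : (b - 2) * b ^ i + 2 * b ^ i = b * b ^ i := by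
      rw [← add_mul]; congr 1; omega
    have h3 : b ^ (i + 1) = b * b ^ i := by rw [pow_succ]; ring
    have h4 : pval b x i < b ^ i := pval_lt hb1 x i
    have h5 : r ≤ b ^ i := le_trans hri (Nat.pow_le_pow_right hb1 hi)
    have h6 : 1 ≤ b ^ i := Nat.one_le_pow _ _ (by omega)
    omega
  -- Bad ⊆ {x | pval x (r+j) ∈ M_j}
  have hsub : ∀ j, Bad ⊆ {x : ℕ → Fin b |
      pval b x (r + j) ∈ (Finset.range (b ^ r)).image (· + (b ^ (r + j) - b ^ r))} := by
    intro j x hx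
    simp only [Set.mem_setOf_eq, Finset.mem_image, Finset.mem_range]
    refine ⟨pval b x r, pval_lt hb1 x r, ?_⟩
    rw [pval_split x r j]
    congr 1
    have : ∀ i ∈ Finset.range j, (x (r + i) : ℕ) * b ^ i = (b - 1) * b ^ i := by
      intro i _
      rw [hdig x hx (r + i) (by omega)]
    rw [Finset.sum_congr rfl this, geo_sum hb1 j]
    have h1 : b ^ (r + j) = b ^ r * b ^ j := by rw [pow_add]
    have h2 : 1 ≤ b ^ j := Nat.one_le_pow _ _ (by omega)
    have h3 : 1 ≤ b ^ r := Nat.one_le_pow _ _ (by omega)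
    rw [Nat.sub_mul, one_mul, mul_comm]
    omega
  set c := (b : ENNReal) ^ r * (1 / (b : ENNReal)) ^ r with hc
  have hle : ∀ j : ℕ, P Bad ≤ c * (1 / (b : ENNReal)) ^ j := by
    intro j
    calc P Bad ≤ P {x : ℕ → Fin b |
        pval b x (r + j) ∈ (Finset.range (b ^ r)).image (· + (b ^ (r + j) - b ^ r))} :=
          measure_mono (hsub j)
      _ = ((Finset.range (b ^ r)).image (· + (b ^ (r + j) - b ^ r))).card
            * (1 / (b : ENNReal)) ^ (r + j) := by
          apply P_pval_mem hb hP
          intro m hm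
          simp only [Finset.mem_image, Finset.mem_range] at hm
          obtain ⟨t, ht, rfl⟩ := hm
          have h3 : 1 ≤ b ^ r := Nat.one_le_pow _ _ (by omega)
          have h4 : b ^ r ≤ b ^ (r + j) := Nat.pow_le_pow_right hb1 (by omega)
          omega
      _ ≤ c * (1 / (b : ENNReal)) ^ j := by
          rw [show (1/(b:ENNReal))^(r+j) = (1/(b:ENNReal))^r * (1/(b:ENNReal))^j from pow_add _ r j]
          rw [hc, ← mul_assoc]
          apply mul_le_mul_left
          apply mul_le_mul_left
          calc (((Finset.range (b ^ r)).image (· + (b ^ (r + j) - b ^ r))).card : ENNReal)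
              ≤ ((Finset.range (b ^ r)).card : ENNReal) := by
                exact_mod_cast Finset.card_image_le
            _ = (b : ENNReal) ^ r := by rw [Finset.card_range]; push_cast; rfl
  have hbne : (b : ENNReal) ≠ 0 := by
    simp only [ne_eq, Nat.cast_eq_zero]; omega
  have hcne : c ≠ ⊤ := by
    apply ENNReal.mul_ne_top
    · exact ENNReal.pow_ne_top (ENNReal.natCast_ne_top b)
    · apply ENNReal.pow_ne_top
      simp only [one_div, ne_eq, ENNReal.inv_eq_top]
      exact hbne
  have hlt : (1 / (b : ENNReal)) < 1 := by
    rw [one_div]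
    rw [ENNReal.inv_lt_one]
    exact_mod_cast (by omega : (1:ℕ) < b)
  have h0 : Tendsto (fun j : ℕ => (1 / (b : ENNReal)) ^ j) atTop (𝓝 0) :=
    ENNReal.tendsto_pow_atTop_nhds_zero_of_lt_one hlt
  have htend : Tendsto (fun j : ℕ => c * (1 / (b : ENNReal)) ^ j) atTop (𝓝 0) := by
    have := ENNReal.Tendsto.const_mul h0 (Or.inr hcne)
    simpa using this
  have := ge_of_tendsto' htend hle
  simpa using this
end NullSet

section ACont
variable {b : ℕ} {P : Measure (ℕ → Fin b)} {r : ℕ} {f : ℤ → ℂ}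
variable (hb : 2 ≤ b)
  (hP : ∀ (k : ℕ) (a : ℕ → Fin b), P {x | ∀ i < k, x i = a i} = (1 / (b : ENNReal)) ^ k)

include hb hP in
lemma tendsto_integral_bad (hr : 1 ≤ r) (hf : Integrable (fun x => f (deltaX b r x)) P) :
    Tendsto (fun K => ∫ x in {x : ℕ → Fin b | pval b x K + r < b ^ K}ᶜ, f (deltaX b r x) ∂P)
      atTop (𝓝 0) := by
  set g := fun x : ℕ → Fin b => f (deltaX b r x) with hg
  set G : ℕ → Set (ℕ → Fin b) := fun K => {x | pval b x K + r < b ^ K} with hG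
  set Bad := ⋂ K, (G K)ᶜ with hBad
  have hGmeas : ∀ K, MeasurableSet (G K) := fun K => measurableSet_pval_prop (fun v => v + r < b ^ K) K
  have hBmeas : MeasurableSet Bad := MeasurableSet.iInter (fun K => (hGmeas K).compl)
  have hGmono : ∀ K, ∀ x, x ∈ G K → x ∈ G (K + 1) := by
    intro K x hx
    exact Gset_mono hb hx
  have hGmono' : ∀ K L, K ≤ L → ∀ x, x ∈ G K → x ∈ G L := by
    intro K L hKL
    induction L with
    | zero => intro x hx; rw [(by omega : K = 0)] at hx; exact hx
    | succ L ih =>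
      rcases Nat.lt_or_ge K (L + 1) with h | h
      · intro x hx; exact hGmono L x (ih (by omega) x hx)
      · intro x hx; rw [(by omega : K = L + 1)] at hx; exact hx
  have hptw : ∀ x, Tendsto (fun K => ((G K)ᶜ).indicator g x) atTop (𝓝 (Bad.indicator g x)) := by
    intro x
    by_cases hx : x ∈ Bad
    · have : ∀ K, ((G K)ᶜ).indicator g x = g x := by
        intro K
        rw [Set.indicator_of_mem (Set.mem_iInter.mp hx K)]
      rw [Set.indicator_of_mem hx]
      simp only [this]
      exact tendsto_const_nhds
    · rw [Set.indicator_of_notMem hx]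
      obtain ⟨K₀, hK₀⟩ : ∃ K₀, x ∈ G K₀ := by
        by_contra hcon
        push_neg at hcon
        exact hx (Set.mem_iInter.mpr (fun K => hcon K))
      apply Tendsto.congr' _ tendsto_const_nhds
      filter_upwards [eventually_ge_atTop K₀] with K hK
      rw [Set.indicator_of_notMem (by simp only [Set.mem_compl_iff, not_not]; exact hGmono' K₀ K hK x hK₀)]
  have hlim : Tendsto (fun K => ∫ x, ((G K)ᶜ).indicator g x ∂P) atTop (𝓝 (∫ x, Bad.indicator g x ∂P)) := by
    apply tendsto_integral_of_dominated_convergence (fun x => ‖g x‖)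
    · exact fun K => hf.aestronglyMeasurable.indicator (hGmeas K).compl
    · exact hf.norm
    · intro K
      exact Filter.Eventually.of_forall (fun x => norm_indicator_le_norm_self _ _)
    · exact Filter.Eventually.of_forall hptw
  have hzero : ∫ x, Bad.indicator g x ∂P = 0 := by
    rw [integral_indicator hBmeas]
    rw [Measure.restrict_eq_zero.mpr (P_bad_zero hb hP hr)]
    simp
  have : (fun K => ∫ x in (G K)ᶜ, g x ∂P) = (fun K => ∫ x, ((G K)ᶜ).indicator g x ∂P) := by
    funext K
    rw [integral_indicator (hGmeas K).compl]
  rw [this]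
  rw [← hzero]
  exact hlim
end ACont

lemma bad_sum_le {b r : ℕ} (hb : 2 ≤ b) (hr : 1 ≤ r) (f : ℤ → ℂ) (k N : ℕ) :
    ∑ n ∈ (Finset.range N).filter (fun n => b ^ k ≤ n % b ^ k + r), ‖f (delta b r n)‖
      ≤ ∑ k' ∈ Finset.Ioc k (Nat.log b (N + r) + 1), ∑ m ∈ Bfin b r k',
          ‖f (delta b r m)‖ * (((Finset.range N).filter (fun n => n % b ^ k' = m)).card : ℝ) := by
  have hb1 : (1:ℕ) < b := by omega
  set K := Nat.log b (N + r) + 1 with hK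
  set w : ℕ → ℕ → ℝ := fun k' n =>
    if n % b ^ k' ∈ Bfin b r k' then ‖f (delta b r (n % b ^ k'))‖ else 0 with hw
  have hwnonneg : ∀ k' n, 0 ≤ w k' n := by
    intro k' n
    simp only [hw]
    split <;> [exact norm_nonneg _; exact le_refl 0]
  have hperN : ∀ n ∈ (Finset.range N).filter (fun n => b ^ k ≤ n % b ^ k + r),
      ‖f (delta b r n)‖ ≤ ∑ k' ∈ Finset.Ioc k K, w k' n := by
    intro n hn
    simp only [Finset.mem_filter, Finset.mem_range] at hn
    obtain ⟨hnN, hbad⟩ := hn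
    have hNrK : N + r < b ^ K := Nat.lt_pow_succ_log_self hb1 (N + r)
    have hnK : n < b ^ K := by omega
    have hQK : k < K ∧ n % b ^ K + r < b ^ K := by
      constructor
      · by_contra hcon
        push_neg at hcon
        have h1 : b ^ K ≤ b ^ k := Nat.pow_le_pow_right (by omega) hcon
        have h2 : n % b ^ k ≤ n := Nat.mod_le _ _
        omega
      · rw [Nat.mod_eq_of_lt hnK]; omega
    have hex : ∃ j, k < j ∧ n % b ^ j + r < b ^ j := ⟨K, hQK⟩
    set k' := Nat.find hex with hk'
    obtain ⟨hkk', hgood⟩ := Nat.find_spec hex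
    have hk'K : k' ≤ K := Nat.find_min' hex hQK
    have hbadprev : b ^ (k' - 1) ≤ n % b ^ (k' - 1) + r := by
      rcases Nat.lt_or_ge k (k' - 1) with h | h
      · have := Nat.find_min hex (m := k' - 1) (by omega)
        push_neg at this
        exact this h
      · have : k' - 1 = k := by omega
        rw [this]; exact hbad
    have hmmem : n % b ^ k' ∈ Bfin b r k' := by
      simp only [Bfin, Finset.mem_filter, Finset.mem_range]
      refine ⟨Nat.mod_lt _ (by positivity), hgood, ?_⟩
      rw [Nat.mod_mod_of_dvd _ (pow_dvd_pow b (by omega : k' - 1 ≤ k'))]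
      exact hbadprev
    have hterm : w k' n = ‖f (delta b r n)‖ := by
      rw [hw]
      simp only [hmmem, if_true]
      rw [← delta_mod hb k' n hgood]
    rw [← hterm]
    apply Finset.single_le_sum (fun j _ => hwnonneg j n)
    simp only [Finset.mem_Ioc]
    exact ⟨hkk', hk'K⟩
  calc ∑ n ∈ (Finset.range N).filter (fun n => b ^ k ≤ n % b ^ k + r), ‖f (delta b r n)‖
      ≤ ∑ n ∈ (Finset.range N).filter (fun n => b ^ k ≤ n % b ^ k + r),
          ∑ k' ∈ Finset.Ioc k K, w k' n := Finset.sum_le_sum hperN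
    _ ≤ ∑ n ∈ Finset.range N, ∑ k' ∈ Finset.Ioc k K, w k' n := by
        apply Finset.sum_le_sum_of_subset_of_nonneg (Finset.filter_subset _ _)
        intro n _ _
        exact Finset.sum_nonneg (fun j _ => hwnonneg j n)
    _ = ∑ k' ∈ Finset.Ioc k K, ∑ n ∈ Finset.range N, w k' n := Finset.sum_comm
    _ = ∑ k' ∈ Finset.Ioc k K, ∑ m ∈ Bfin b r k',
          ‖f (delta b r m)‖ * (((Finset.range N).filter (fun n => n % b ^ k' = m)).card : ℝ) := by
        refine Finset.sum_congr rfl fun k' _ => ?_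
        have hp : 1 ≤ b ^ k' := Nat.one_le_pow _ _ (by omega)
        have hBsub : Bfin b r k' ⊆ Finset.range (b ^ k') := Finset.filter_subset _ _
        have e1 : ∑ n ∈ Finset.range N, w k' n
            = ∑ m ∈ Finset.range (b ^ k'),
                ((Finset.range N).filter (fun n => n % b ^ k' = m)).card
                  • (if m ∈ Bfin b r k' then ‖f (delta b r m)‖ else 0) :=
          sum_mod_fiber (fun t => if t ∈ Bfin b r k' then ‖f (delta b r t)‖ else 0) N (b ^ k') hp
        have e2 : ∀ t ∈ Finset.range (b ^ k'),
            ((Finset.range N).filter (fun n => n % b ^ k' = t)).card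
              • (if t ∈ Bfin b r k' then ‖f (delta b r t)‖ else 0)
            = (if t ∈ Bfin b r k' then
                ‖f (delta b r t)‖ * (((Finset.range N).filter (fun n => n % b ^ k' = t)).card : ℝ)
              else 0) := by
          intro t _
          split
          · rw [nsmul_eq_mul, mul_comm]
          · simp
        rw [e1, Finset.sum_congr rfl e2, Finset.sum_ite_mem, Finset.inter_eq_right.mpr hBsub]

/-- **Proposition (averages of integrable functions).** Let `r ≥ 1` and `f : ℤ → ℂ` be such
that `f ∘ Δ^(r)` is `ℙ`-integrable on `X`. Then
`lim_N (1/N)·Σ_{n<N} f(Δ^(r)(n)) = ∫ f(Δ^(r)(x)) dℙ(x)`. -/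
theorem average_integrable (b : ℕ) (hb : 2 ≤ b)
    (P : Measure (ℕ → Fin b))
    (hP : ∀ (k : ℕ) (a : ℕ → Fin b),
      P {x | ∀ i < k, x i = a i} = (1 / (b : ENNReal)) ^ k)
    (r : ℕ) (hr : 1 ≤ r)
    (f : ℤ → ℂ) (hf : Integrable (fun x => f (deltaX b r x)) P) :
    Tendsto (fun N : ℕ => (N : ℂ)⁻¹ * ∑ n ∈ Finset.range N, f (delta b r n)) atTop
      (𝓝 (∫ x, f (deltaX b r x) ∂P)) := by
  have hb1 : (1:ℕ) ≤ b := by omega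
  have hbR : (0:ℝ) < b := by exact_mod_cast (by omega : 0 < b)
  set I : ℂ := ∫ x, f (deltaX b r x) ∂P with hI
  -- the summable series of bad contributions
  set a : ℕ → ℝ := fun k' => ∑ m ∈ Bfin b r k', ((b : ℝ) ^ (k' + 1))⁻¹ * ‖f (delta b r m)‖
    with ha
  have hanonneg : ∀ k', 0 ≤ a k' := by
    intro k'
    apply Finset.sum_nonneg
    intro m _
    positivity
  have hasum : Summable a :=
    summable_of_sum_le hanonneg (fun S => sum_pairs_le hb hP hr hf S)
  rw [Metric.tendsto_atTop]
  intro ε hε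
  set ε' := ε / 6 with hε'
  have hε'pos : 0 < ε' := by positivity
  -- choose k
  have hev1 : ∀ᶠ k in atTop,
      ‖∫ x in {x : ℕ → Fin b | pval b x k + r < b ^ k}ᶜ, f (deltaX b r x) ∂P‖ < ε' := by
    have h1 := tendsto_integral_bad hb hP hr hf
    have := Metric.tendsto_atTop.mp h1 ε' hε'pos
    obtain ⟨N₁, hN₁⟩ := this
    filter_upwards [eventually_ge_atTop N₁] with k hk
    have := hN₁ k hk
    rwa [dist_zero_right] at this
  have hev2 : ∀ᶠ k in atTop, (∑' j, a j) - ∑ j ∈ Finset.range (k + 1), a j < ε' / b := by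
    have h2 := hasum.hasSum.tendsto_sum_nat
    have := Metric.tendsto_atTop.mp h2 (ε' / b) (by positivity)
    obtain ⟨N₂, hN₂⟩ := this
    filter_upwards [eventually_ge_atTop N₂] with k hk
    have := hN₂ (k + 1) (by omega)
    rw [Real.dist_eq, abs_lt] at this
    linarith [this.2]
  obtain ⟨k, hk1, hkA, hktail⟩ :
      ∃ k, 1 ≤ k ∧
        ‖∫ x in {x : ℕ → Fin b | pval b x k + r < b ^ k}ᶜ, f (deltaX b r x) ∂P‖ < ε' ∧
        (∑' j, a j) - ∑ j ∈ Finset.range (k + 1), a j < ε' / b := by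
    obtain ⟨k, h1, h2, h3⟩ := (eventually_ge_atTop 1 |>.and (hev1.and hev2)).exists
    exact ⟨k, h1, h2, h3⟩
  -- choose K₀ and δ
  set δ := ε' / ((b : ℝ) ^ 3 * (1 + r)) with hδ
  have hδpos : 0 < δ := by positivity
  obtain ⟨K₀, hK₀⟩ : ∃ K₀, ∀ j, K₀ ≤ j → a j ≤ δ := by
    have := Metric.tendsto_atTop.mp hasum.tendsto_atTop_zero δ hδpos
    obtain ⟨K₀, hK₀⟩ := this
    refine ⟨K₀, fun j hj => ?_⟩
    have := hK₀ j hj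
    rw [dist_zero_right, Real.norm_eq_abs, abs_lt] at this
    linarith [this.2]
  set C₀ := ∑ j ∈ Finset.range (K₀ + 1), (b : ℝ) ^ (j + 1) * a j with hC₀
  have hC₀nonneg : 0 ≤ C₀ :=
    Finset.sum_nonneg (fun j _ => mul_nonneg (by positivity) (hanonneg j))
  -- periodic approximation
  set p := b ^ k with hp
  have hp1 : 1 ≤ p := Nat.one_le_pow _ _ (by omega)
  set φ : ℕ → ℂ := fun m => if m + r < b ^ k then f (delta b r m) else 0 with hφ
  set G : Set (ℕ → Fin b) := {x | pval b x k + r < b ^ k} with hG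
  have hGmeas : MeasurableSet G := measurableSet_pval_prop (fun v => v + r < b ^ k) k
  set Lφ : ℂ := (p : ℂ)⁻¹ * ∑ m ∈ Finset.range p, φ m with hLφdef
  have hLφ : Lφ = ∫ x in G, f (deltaX b r x) ∂P := by
    rw [integral_Gset hb hP hr k hf, hLφdef]
    have e1 : ∑ m ∈ Finset.range p, φ m
        = ∑ m ∈ (Finset.range (b ^ k)).filter (fun m => m + r < b ^ k), f (delta b r m) := by
      rw [Finset.sum_filter, hp]
    rw [e1, Finset.mul_sum]
    refine Finset.sum_congr rfl fun m _ => ?_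
    rw [Complex.real_smul]
    congr 1
    rw [hp]
    push_cast
    ring
  have hBdiff : Lφ - I = -∫ x in Gᶜ, f (deltaX b r x) ∂P := by
    have := integral_add_compl hGmeas hf
    rw [hLφ, hI, ← this]
    ring
  -- decomposition identity
  have hdecomp : ∀ N, ∑ n ∈ Finset.range N, f (delta b r n)
      = (∑ n ∈ Finset.range N, φ (n % p))
        + ∑ n ∈ (Finset.range N).filter (fun n => b ^ k ≤ n % b ^ k + r), f (delta b r n) := by
    intro N
    rw [Finset.sum_filter, ← Finset.sum_add_distrib]
    refine Finset.sum_congr rfl fun n _ => ?_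
    by_cases hgood : n % b ^ k + r < b ^ k
    · rw [hφ]
      simp only [hp]
      rw [if_pos hgood, if_neg (by omega), add_zero, delta_mod hb k n hgood]
    · rw [hφ]
      simp only [hp]
      rw [if_neg hgood, if_pos (by omega), zero_add]
  -- eventual bounds in N
  have hperev : ∀ᶠ N : ℕ in atTop,
      dist ((N : ℂ)⁻¹ * ∑ n ∈ Finset.range N, φ (n % p)) Lφ < ε' := by
    have := Metric.tendsto_atTop.mp (tendsto_avg_periodic φ p hp1) ε' hε'pos
    obtain ⟨N₃, hN₃⟩ := this
    filter_upwards [eventually_ge_atTop N₃] with N hN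
    exact hN₃ N hN
  have hC₀ev : ∀ᶠ N : ℕ in atTop, C₀ / (N : ℝ) < ε' := by
    have := tendsto_const_div_atTop_nhds_zero_nat C₀
    have h := Metric.tendsto_atTop.mp this ε' hε'pos
    obtain ⟨N₄, hN₄⟩ := h
    filter_upwards [eventually_ge_atTop N₄] with N hN
    have := hN₄ N hN
    rw [dist_zero_right, Real.norm_eq_abs, abs_lt] at this
    linarith [this.2]
  rw [Filter.eventually_atTop] at hperev hC₀ev
  obtain ⟨N₃, hN₃⟩ := hperev
  obtain ⟨N₄, hN₄⟩ := hC₀ev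
  refine ⟨max (max N₃ N₄) (max 1 (b ^ (k + 1))), fun N hN => ?_⟩
  have hN3 : N₃ ≤ N := le_trans (le_trans (le_max_left _ _) (le_max_left _ _)) hN
  have hN4 : N₄ ≤ N := le_trans (le_trans (le_max_right _ _) (le_max_left _ _)) hN
  have hN1 : 1 ≤ N := le_trans (le_trans (le_max_left _ _) (le_max_right _ _)) hN
  have hNbk : b ^ (k + 1) ≤ N := le_trans (le_trans (le_max_right _ _) (le_max_right _ _)) hN
  have hNR : (0:ℝ) < N := by exact_mod_cast hN1
  -- main estimate
  rw [dist_eq_norm]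
  set badsum : ℂ := ∑ n ∈ (Finset.range N).filter (fun n => b ^ k ≤ n % b ^ k + r),
    f (delta b r n) with hbadsum
  have key : (N : ℂ)⁻¹ * ∑ n ∈ Finset.range N, f (delta b r n) - I
      = (((N : ℂ)⁻¹ * ∑ n ∈ Finset.range N, φ (n % p)) - Lφ) + (Lφ - I)
        + (N : ℂ)⁻¹ * badsum := by
    rw [hdecomp N, hbadsum]
    ring
  rw [key]
  have hA : ‖((N : ℂ)⁻¹ * ∑ n ∈ Finset.range N, φ (n % p)) - Lφ‖ < ε' := by
    have := hN₃ N hN3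
    rwa [dist_eq_norm] at this
  have hB : ‖Lφ - I‖ < ε' := by
    rw [hBdiff, norm_neg]
    exact hkA
  -- the bad term
  set K := Nat.log b (N + r) + 1 with hKdef
  have hbadnorm : ‖(N : ℂ)⁻¹ * badsum‖
      ≤ (N : ℝ)⁻¹ * ∑ n ∈ (Finset.range N).filter (fun n => b ^ k ≤ n % b ^ k + r),
          ‖f (delta b r n)‖ := by
    rw [norm_mul, norm_inv, Complex.norm_natCast, hbadsum]
    apply mul_le_mul_of_nonneg_left (norm_sum_le _ _) (by positivity)
  have hstep1 : ∑ n ∈ (Finset.range N).filter (fun n => b ^ k ≤ n % b ^ k + r),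
      ‖f (delta b r n)‖
      ≤ ∑ k' ∈ Finset.Ioc k K, ∑ m ∈ Bfin b r k',
          ‖f (delta b r m)‖ * (((Finset.range N).filter (fun n => n % b ^ k' = m)).card : ℝ) :=
    bad_sum_le hb hr f k N
  -- card bound and scale-wise estimate
  have hscale : ∀ k' ∈ Finset.Ioc k K,
      ∑ m ∈ Bfin b r k',
          ‖f (delta b r m)‖ * (((Finset.range N).filter (fun n => n % b ^ k' = m)).card : ℝ)
      ≤ (N : ℝ) * b * a k' + (b : ℝ) ^ (k' + 1) * a k' := by
    intro k' _
    have hpk : (1:ℕ) ≤ b ^ k' := Nat.one_le_pow _ _ (by omega)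
    have hpkR : (0:ℝ) < (b : ℝ) ^ k' := by positivity
    have hcard : ∀ m, (((Finset.range N).filter (fun n => n % b ^ k' = m)).card : ℝ)
        ≤ (N : ℝ) / (b : ℝ) ^ k' + 1 := by
      intro m
      have h1 := card_fiber_le N (b ^ k') m hpk
      have h2 : ((N / b ^ k' : ℕ) : ℝ) ≤ (N : ℝ) / ((b ^ k' : ℕ) : ℝ) := Nat.cast_div_le
      have h3 : ((b ^ k' : ℕ) : ℝ) = (b : ℝ) ^ k' := by push_cast; ring
      rw [h3] at h2
      have h4 : (((Finset.range N).filter (fun n => n % b ^ k' = m)).card : ℝ)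
          ≤ ((N / b ^ k' : ℕ) : ℝ) + 1 := by exact_mod_cast h1
      linarith
    calc ∑ m ∈ Bfin b r k',
          ‖f (delta b r m)‖ * (((Finset.range N).filter (fun n => n % b ^ k' = m)).card : ℝ)
        ≤ ∑ m ∈ Bfin b r k', ‖f (delta b r m)‖ * ((N : ℝ) / (b : ℝ) ^ k' + 1) := by
          apply Finset.sum_le_sum
          intro m _
          exact mul_le_mul_of_nonneg_left (hcard m) (norm_nonneg _)
      _ = ((N : ℝ) / (b : ℝ) ^ k' + 1) * ∑ m ∈ Bfin b r k', ‖f (delta b r m)‖ := by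
          rw [Finset.mul_sum]
          refine Finset.sum_congr rfl fun m _ => by ring
      _ = (N : ℝ) * b * a k' + (b : ℝ) ^ (k' + 1) * a k' := by
          have hsf : ∑ m ∈ Bfin b r k', ‖f (delta b r m)‖
              = (b : ℝ) ^ (k' + 1) * a k' := by
            simp only [ha]
            rw [Finset.mul_sum]
            refine Finset.sum_congr rfl fun m _ => ?_
            rw [← mul_assoc, mul_inv_cancel₀ (by positivity : ((b:ℝ) ^ (k' + 1)) ≠ 0), one_mul]
          rw [hsf]
          have hbk' : (b : ℝ) ^ (k' + 1) = (b : ℝ) ^ k' * b := by ring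
          field_simp
          ring
  have hstep2 : ∑ k' ∈ Finset.Ioc k K, ∑ m ∈ Bfin b r k',
        ‖f (delta b r m)‖ * (((Finset.range N).filter (fun n => n % b ^ k' = m)).card : ℝ)
      ≤ (N : ℝ) * b * (∑ k' ∈ Finset.Ioc k K, a k')
        + ∑ k' ∈ Finset.Ioc k K, (b : ℝ) ^ (k' + 1) * a k' := by
    calc ∑ k' ∈ Finset.Ioc k K, ∑ m ∈ Bfin b r k', _
        ≤ ∑ k' ∈ Finset.Ioc k K, ((N : ℝ) * b * a k' + (b : ℝ) ^ (k' + 1) * a k') :=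
          Finset.sum_le_sum hscale
      _ = (N : ℝ) * b * (∑ k' ∈ Finset.Ioc k K, a k')
          + ∑ k' ∈ Finset.Ioc k K, (b : ℝ) ^ (k' + 1) * a k' := by
          rw [Finset.sum_add_distrib, Finset.mul_sum]
  -- tail bound
  have htail : ∑ k' ∈ Finset.Ioc k K, a k' ≤ ε' / b := by
    have hsub : Finset.Ioc k K ⊆ Finset.range (K + 1) \ Finset.range (k + 1) := by
      intro j hj
      simp only [Finset.mem_Ioc] at hj
      simp only [Finset.mem_sdiff, Finset.mem_range]
      omega
    have h1 : ∑ k' ∈ Finset.Ioc k K, a k'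
        ≤ ∑ k' ∈ Finset.range (K + 1) \ Finset.range (k + 1), a k' :=
      Finset.sum_le_sum_of_subset_of_nonneg hsub (fun j _ _ => hanonneg j)
    have h2 : ∑ k' ∈ Finset.range (K + 1) \ Finset.range (k + 1), a k'
        = ∑ k' ∈ Finset.range (K + 1), a k' - ∑ k' ∈ Finset.range (k + 1), a k' := by
      rw [eq_sub_iff_add_eq]
      exact Finset.sum_sdiff (by
        intro j hj
        simp only [Finset.mem_range] at hj ⊢
        have hlog : k + 1 ≤ Nat.log b (N + r) :=
          Nat.le_log_of_pow_le (by omega)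
            (by calc b ^ (k + 1) ≤ N := hNbk
                  _ ≤ N + r := by omega)
        rw [hKdef]
        omega)
    have h3 : ∑ k' ∈ Finset.range (K + 1), a k' ≤ ∑' j, a j :=
      hasum.sum_le_tsum _ (fun j _ => hanonneg j)
    linarith
  -- geometric bound
  have hgeo : ∑ k' ∈ Finset.Ioc k K, (b : ℝ) ^ (k' + 1) * a k' ≤ C₀ + δ * (b : ℝ) ^ (K + 2) := by
    have hsplit : ∑ k' ∈ Finset.Ioc k K, (b : ℝ) ^ (k' + 1) * a k'
        = ∑ k' ∈ (Finset.Ioc k K).filter (fun j => j ≤ K₀), (b : ℝ) ^ (k' + 1) * a k'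
          + ∑ k' ∈ (Finset.Ioc k K).filter (fun j => ¬ j ≤ K₀), (b : ℝ) ^ (k' + 1) * a k' :=
      (Finset.sum_filter_add_sum_filter_not _ _ _).symm
    have hpart1 : ∑ k' ∈ (Finset.Ioc k K).filter (fun j => j ≤ K₀), (b : ℝ) ^ (k' + 1) * a k'
        ≤ C₀ := by
      rw [hC₀]
      apply Finset.sum_le_sum_of_subset_of_nonneg
      · intro j hj
        simp only [Finset.mem_filter, Finset.mem_Ioc] at hj
        simp only [Finset.mem_range]
        omega
      · intro j _ _
        exact mul_nonneg (by positivity) (hanonneg j)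
    have hpart2 : ∑ k' ∈ (Finset.Ioc k K).filter (fun j => ¬ j ≤ K₀), (b : ℝ) ^ (k' + 1) * a k'
        ≤ δ * (b : ℝ) ^ (K + 2) := by
      have hgeoN : (∑ i ∈ Finset.range (K + 1), b ^ i) ≤ b ^ (K + 1) := by
        have h1 : ∀ i ∈ Finset.range (K + 1), b ^ i ≤ (b - 1) * b ^ i := by
          intro i _
          have : 1 ≤ b - 1 := by omega
          calc b ^ i = 1 * b ^ i := (one_mul _).symm
            _ ≤ (b - 1) * b ^ i := Nat.mul_le_mul_right _ this
        calc ∑ i ∈ Finset.range (K + 1), b ^ i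
            ≤ ∑ i ∈ Finset.range (K + 1), (b - 1) * b ^ i := Finset.sum_le_sum h1
          _ = b ^ (K + 1) - 1 := geo_sum hb1 _
          _ ≤ b ^ (K + 1) := by omega
      calc ∑ k' ∈ (Finset.Ioc k K).filter (fun j => ¬ j ≤ K₀), (b : ℝ) ^ (k' + 1) * a k'
          ≤ ∑ k' ∈ (Finset.Ioc k K).filter (fun j => ¬ j ≤ K₀), (b : ℝ) ^ (k' + 1) * δ := by
            apply Finset.sum_le_sum
            intro j hj
            simp only [Finset.mem_filter] at hj
            exact mul_le_mul_of_nonneg_left (hK₀ j (by omega)) (by positivity)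
        _ ≤ ∑ k' ∈ Finset.range (K + 1), (b : ℝ) ^ (k' + 1) * δ := by
            apply Finset.sum_le_sum_of_subset_of_nonneg
            · intro j hj
              simp only [Finset.mem_filter, Finset.mem_Ioc] at hj
              simp only [Finset.mem_range]
              omega
            · intro j _ _
              positivity
        _ = δ * ((b:ℝ) * ∑ k' ∈ Finset.range (K + 1), (b : ℝ) ^ k') := by
            rw [Finset.mul_sum, Finset.mul_sum]
            refine Finset.sum_congr rfl fun j _ => by ring
        _ ≤ δ * ((b:ℝ) * (b : ℝ) ^ (K + 1)) := by
            apply mul_le_mul_of_nonneg_left _ (le_of_lt hδpos)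
            apply mul_le_mul_of_nonneg_left _ (by positivity)
            have : ((∑ i ∈ Finset.range (K + 1), b ^ i : ℕ) : ℝ)
                ≤ ((b ^ (K + 1) : ℕ) : ℝ) := by exact_mod_cast hgeoN
            calc ∑ k' ∈ Finset.range (K + 1), (b : ℝ) ^ k'
                = ((∑ i ∈ Finset.range (K + 1), b ^ i : ℕ) : ℝ) := by push_cast; ring
              _ ≤ ((b ^ (K + 1) : ℕ) : ℝ) := this
              _ = (b : ℝ) ^ (K + 1) := by push_cast; ring
        _ = δ * (b : ℝ) ^ (K + 2) := by ring
    linarith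
  -- b^(K+2) ≤ b^3 (1+r) N
  have hbK : (b : ℝ) ^ (K + 2) ≤ (b : ℝ) ^ 3 * (1 + r) * N := by
    have h1 : b ^ Nat.log b (N + r) ≤ N + r := Nat.pow_log_le_self b (by omega)
    have h2 : (b : ℝ) ^ K ≤ (b : ℝ) * (N + r) := by
      rw [hKdef, pow_succ, mul_comm]
      apply mul_le_mul_of_nonneg_left _ (by positivity)
      calc (b : ℝ) ^ Nat.log b (N + r) = ((b ^ Nat.log b (N + r) : ℕ) : ℝ) := by push_cast; ring
        _ ≤ ((N + r : ℕ) : ℝ) := by exact_mod_cast h1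
        _ = (N : ℝ) + r := by push_cast; ring
    have h3 : (N : ℝ) + r ≤ (1 + r) * N := by
      have : (1:ℝ) ≤ N := by exact_mod_cast hN1
      have hrR : (0:ℝ) ≤ r := by positivity
      nlinarith
    have h4 : (b:ℝ)^2 * (b:ℝ)^K ≤ (b:ℝ)^2 * ((b:ℝ)*((N:ℝ)+r)) :=
      mul_le_mul_of_nonneg_left h2 (by positivity)
    have h5 : (b:ℝ)^3 * ((N:ℝ)+r) ≤ (b:ℝ)^3 * ((1+(r:ℝ))*N) :=
      mul_le_mul_of_nonneg_left h3 (by positivity)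
    calc (b : ℝ) ^ (K + 2) = (b : ℝ) ^ 2 * (b : ℝ) ^ K := by ring
      _ ≤ (b : ℝ) ^ 2 * ((b : ℝ) * ((N : ℝ) + r)) := h4
      _ = (b : ℝ) ^ 3 * ((N : ℝ) + r) := by ring
      _ ≤ (b : ℝ) ^ 3 * ((1 + (r:ℝ)) * N) := h5
      _ = (b : ℝ) ^ 3 * (1 + r) * N := by ring
  -- putting the bad bound together
  have hbad : ‖(N : ℂ)⁻¹ * badsum‖ ≤ ε' + (ε' + ε') := by
    have hchain : ‖(N : ℂ)⁻¹ * badsum‖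
        ≤ (N : ℝ)⁻¹ * ((N : ℝ) * b * (∑ k' ∈ Finset.Ioc k K, a k')
          + (C₀ + δ * (b : ℝ) ^ (K + 2))) := by
      apply le_trans hbadnorm
      apply mul_le_mul_of_nonneg_left _ (by positivity)
      apply le_trans hstep1
      apply le_trans hstep2
      have := htail
      linarith [hgeo]
    apply le_trans hchain
    have e1 : (N : ℝ)⁻¹ * ((N : ℝ) * b * (∑ k' ∈ Finset.Ioc k K, a k'))
        = b * (∑ k' ∈ Finset.Ioc k K, a k') := by
      field_simp
    have hb2 : b * (∑ k' ∈ Finset.Ioc k K, a k') ≤ ε' := by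
      calc b * (∑ k' ∈ Finset.Ioc k K, a k') ≤ b * (ε' / b) :=
        mul_le_mul_of_nonneg_left htail (by positivity)
        _ = ε' := by field_simp
    have hb3 : (N : ℝ)⁻¹ * C₀ ≤ ε' := by
      have := hN₄ N hN4
      rw [div_eq_inv_mul] at this
      linarith
    have hb4 : (N : ℝ)⁻¹ * (δ * (b : ℝ) ^ (K + 2)) ≤ ε' := by
      have h1 : δ * (b : ℝ) ^ (K + 2) ≤ δ * ((b : ℝ) ^ 3 * (1 + r) * N) :=
        mul_le_mul_of_nonneg_left hbK (le_of_lt hδpos)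
      have h2 : δ * ((b : ℝ) ^ 3 * (1 + r)) = ε' := by
        rw [hδ]
        field_simp
      calc (N : ℝ)⁻¹ * (δ * (b : ℝ) ^ (K + 2))
          ≤ (N : ℝ)⁻¹ * (δ * ((b : ℝ) ^ 3 * (1 + r) * N)) :=
            mul_le_mul_of_nonneg_left h1 (by positivity)
        _ = δ * ((b : ℝ) ^ 3 * (1 + r)) := by field_simp
        _ = ε' := h2
    calc (N : ℝ)⁻¹ * ((N : ℝ) * b * (∑ k' ∈ Finset.Ioc k K, a k')
          + (C₀ + δ * (b : ℝ) ^ (K + 2)))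
        = (N : ℝ)⁻¹ * ((N : ℝ) * b * (∑ k' ∈ Finset.Ioc k K, a k'))
          + ((N : ℝ)⁻¹ * C₀ + (N : ℝ)⁻¹ * (δ * (b : ℝ) ^ (K + 2))) := by ring
      _ ≤ ε' + (ε' + ε') := by
          rw [e1]
          exact add_le_add hb2 (add_le_add hb3 hb4)
  calc ‖(((N : ℂ)⁻¹ * ∑ n ∈ Finset.range N, φ (n % p)) - Lφ) + (Lφ - I)
        + (N : ℂ)⁻¹ * badsum‖
      ≤ ‖(((N : ℂ)⁻¹ * ∑ n ∈ Finset.range N, φ (n % p)) - Lφ) + (Lφ - I)‖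
        + ‖(N : ℂ)⁻¹ * badsum‖ := norm_add_le _ _
    _ ≤ ‖((N : ℂ)⁻¹ * ∑ n ∈ Finset.range N, φ (n % p)) - Lφ‖ + ‖Lφ - I‖
        + ‖(N : ℂ)⁻¹ * badsum‖ := by
        apply add_le_add_left (norm_add_le _ _)
    _ < ε' + ε' + (ε' + (ε' + ε')) := by
        apply add_lt_add_of_lt_of_le (add_lt_add hA hB)
        exact hbad
    _ ≤ ε := by
        rw [hε']
        linarith
end
end
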